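/- arXiv:math-ph/0509057 — 5 statements merged into one kernel-verified Lean document; each statement's English description precedes it below -/
import Mathlib

section
/- Let X be a complex Banach space and S, T commuting bounded linear operators on X. Then the Hausdorff distance between σ(S) and σ(T) is at most the spectral radius of S - T. -/
open Filter ENNReal Topology

/-- Submultiplicativity of the spectral radius for commuting elements. -/
lemma spectralRadius_mul_le_of_commute' {A : Type*} [NormedRing A] [NormedAlgebra ℂ A]
    [CompleteSpace A] {a b : A} (h : Commute a b) :
    spectralRadius ℂ (a * b) ≤ spectralRadius ℂ a * spectralRadius ℂ b := by
  have ha := spectrum.pow_nnnorm_pow_one_div_tendsto_nhds_spectralRadius a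
  have hb := spectrum.pow_nnnorm_pow_one_div_tendsto_nhds_spectralRadius b
  have hfin : ∀ c : A, spectralRadius ℂ c ≠ ∞ := by
    intro c
    refine ((spectrum.spectralRadius_le_pow_nnnorm_pow_one_div ℂ c 0).trans_lt ?_).ne
    exact ENNReal.mul_lt_top (by simp) (by simp)
  have key : ∀ n : ℕ, (‖(a * b) ^ n‖₊ : ℝ≥0∞) ^ (1 / n : ℝ) ≤
      (‖a ^ n‖₊ : ℝ≥0∞) ^ (1 / n : ℝ) * (‖b ^ n‖₊ : ℝ≥0∞) ^ (1 / n : ℝ) := by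
    intro n
    rw [h.mul_pow, ← ENNReal.mul_rpow_of_nonneg _ _ (by positivity)]
    refine ENNReal.rpow_le_rpow ?_ (by positivity)
    exact_mod_cast nnnorm_mul_le _ _
  refine (spectrum.spectralRadius_le_liminf_pow_nnnorm_pow_one_div ℂ (a * b)).trans ?_
  have hlim : Tendsto (fun n : ℕ => (‖a ^ n‖₊ : ℝ≥0∞) ^ (1 / n : ℝ) *
      (‖b ^ n‖₊ : ℝ≥0∞) ^ (1 / n : ℝ)) atTop
      (𝓝 (spectralRadius ℂ a * spectralRadius ℂ b)) :=
    ENNReal.Tendsto.mul ha (Or.inr (hfin b)) hb (Or.inr (hfin a))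
  calc atTop.liminf (fun n : ℕ => (‖(a * b) ^ n‖₊ : ℝ≥0∞) ^ (1 / n : ℝ))
      ≤ atTop.liminf (fun n : ℕ => (‖a ^ n‖₊ : ℝ≥0∞) ^ (1 / n : ℝ) *
        (‖b ^ n‖₊ : ℝ≥0∞) ^ (1 / n : ℝ)) := liminf_le_liminf (Eventually.of_forall key)
    _ = spectralRadius ℂ a * spectralRadius ℂ b := hlim.liminf_eq

/-- One-sided spectral distance estimate for commuting elements. -/
lemma infEdist_le_spectralRadius_sub {A : Type*} [NormedRing A] [NormedAlgebra ℂ A]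
    [CompleteSpace A] {a b : A} (hab : Commute a b) {l : ℂ} (hl : l ∈ spectrum ℂ a) :
    EMetric.infEdist l (spectrum ℂ b) ≤ spectralRadius ℂ (a - b) := by
  haveI : Nontrivial A := by
    by_contra hn
    rw [not_nontrivial_iff_subsingleton] at hn
    exact spectrum.mem_iff.mp hl (isUnit_of_subsingleton _)
  by_contra hcon
  push_neg at hcon
  set ρ := spectralRadius ℂ (a - b) with hρ
  set d := EMetric.infEdist l (spectrum ℂ b) with hd
  -- l ∉ σ b
  have hlb : l ∉ spectrum ℂ b := by
    intro hmem
    have h0 : d = 0 := EMetric.infEdist_zero_of_mem hmem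
    rw [h0] at hcon
    exact (not_lt.mpr (zero_le : 0 ≤ ρ)) hcon
  have hu : IsUnit (algebraMap ℂ A l - b) := spectrum.notMem_iff.mp hlb
  set u := hu.unit with hu_def
  have huspec : (↑u : A) = algebraMap ℂ A l - b := hu.unit_spec
  have hd0 : d ≠ 0 := by
    intro h
    rw [h] at hcon
    exact (not_lt.mpr (zero_le : 0 ≤ ρ)) hcon
  have hdtop : d ≠ ∞ := by
    obtain ⟨μ, hμ⟩ := spectrum.nonempty b
    exact ((EMetric.infEdist_le_edist_of_mem hμ).trans_lt (edist_lt_top _ _)).ne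
  -- spectral radius of u⁻¹ is at most d⁻¹
  have hrinv : spectralRadius ℂ (↑u⁻¹ : A) ≤ d⁻¹ := by
    refine iSup₂_le fun ν hν => ?_
    rw [← spectrum.map_inv] at hν
    obtain hν' := Set.mem_inv.mp hν
    have : ν⁻¹ ∈ spectrum ℂ (↑u : A) := hν'
    rw [huspec, ← spectrum.singleton_sub_eq] at this
    obtain ⟨l', hl', μ, hμ, hlm⟩ := this
    rw [Set.mem_singleton_iff] at hl'
    rw [hl'] at hlm
    clear hl'
    have hlm' : l - μ = ν⁻¹ := hlm
    have hne : l - μ ≠ 0 := sub_ne_zero.mpr fun h => hlb (h ▸ hμ)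
    have hν0 : ν = (l - μ)⁻¹ := by rw [hlm', inv_inv]
    rw [hν0]
    have h1 : d ≤ (‖l - μ‖₊ : ℝ≥0∞) := by
      exact (EMetric.infEdist_le_edist_of_mem hμ).trans_eq (edist_eq_enorm_sub l μ)
    rw [nnnorm_inv, ENNReal.coe_inv (by simpa using hne)]
    exact ENNReal.inv_le_inv.mpr h1
  -- spectral radius of u⁻¹ * (a - b) is < 1
  have hcomm : Commute (↑u⁻¹ : A) (a - b) := by
    refine Commute.units_inv_left ?_
    rw [huspec]
    refine Commute.sub_left ?_ ?_
    · exact (Algebra.commutes l (a - b) : _)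
    · exact (hab.symm.sub_right (Commute.refl b))
  have hlt : spectralRadius ℂ ((↑u⁻¹ : A) * (a - b)) < 1 := by
    calc spectralRadius ℂ ((↑u⁻¹ : A) * (a - b))
        ≤ spectralRadius ℂ (↑u⁻¹ : A) * ρ := spectralRadius_mul_le_of_commute' hcomm
      _ ≤ d⁻¹ * ρ := mul_le_mul_left hrinv ρ
      _ < d⁻¹ * d := by
          rw [ENNReal.mul_lt_mul_iff_right (by simpa using hdtop) (by simpa using hd0)]
          exact hcon
      _ = 1 := ENNReal.inv_mul_cancel hd0 hdtop
  have h1 : IsUnit ((1 : A) - (↑u⁻¹ : A) * (a - b)) := by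
    have := spectrum.mem_resolventSet_of_spectralRadius_lt (a := (↑u⁻¹ : A) * (a - b))
      (k := (1 : ℂ)) (by simpa using hlt)
    rw [resolventSet, Set.mem_setOf_eq, map_one] at this
    exact this
  have hfactor : algebraMap ℂ A l - a = ↑u * ((1 : A) - (↑u⁻¹ : A) * (a - b)) := by
    rw [mul_sub, mul_one, ← mul_assoc, u.mul_inv, one_mul, huspec]
    abel
  exact spectrum.mem_iff.mp hl (hfactor ▸ hu.mul h1)

lemma spectralRadius_neg' {A : Type*} [NormedRing A] [NormedAlgebra ℂ A] (x : A) :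
    spectralRadius ℂ (-x) = spectralRadius ℂ x := by
  unfold spectralRadius
  rw [← spectrum.neg_eq]
  rw [show -spectrum ℂ x = (fun z : ℂ => -z) '' spectrum ℂ x by
    rw [Set.image_neg_eq_neg]]
  rw [iSup_image]
  simp

/-- For commuting bounded operators `S, T` on a complex Banach space, the Hausdorff
distance between their spectra is at most the spectral radius of `S - T`. -/
theorem hausdorffDist_spectrum_le_spectralRadius
    {X : Type*} [NormedAddCommGroup X] [NormedSpace ℂ X] [CompleteSpace X]
    (S T : X →L[ℂ] X) (hST : S.comp T = T.comp S) :
    EMetric.hausdorffEdist (spectrum ℂ S) (spectrum ℂ T)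
      ≤ spectralRadius ℂ (S - T) := by
  have hc : Commute S T := hST
  refine EMetric.hausdorffEdist_le_of_infEdist ?_ ?_
  · intro x hx
    exact infEdist_le_spectralRadius_sub hc hx
  · intro y hy
    have := infEdist_le_spectralRadius_sub hc.symm hy
    rwa [show T - S = -(S - T) by abel, spectralRadius_neg'] at this
end

section
/- Let X be a complex Banach space, (X_n)_{n≥0} a sequence of nonzero complemented subspaces with X_n ∩ X_m = {0} for n ≠ m, with projections π_n, and set P_n = π_0 ⊕ ⋯ ⊕ π_n. Let T be a bounded operator on X commuting with each P_n, and set T_n = T ∘ P_n and S_n = T restricted to X_n. If ‖T - T_n‖ → 0, then σ(T) equals the closure of the union over n of σ(S_n). -/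
open ContinuousLinearMap

/-- If `p`, `r`, and `p + r` are idempotents in a `ℂ`-algebra, then `p * r = 0`. -/
theorem idem_sum_mul_eq_zero' {A : Type*} [Ring A] [Algebra ℂ A]
    (p r : A) (hp : p * p = p) (hr : r * r = r) (hpr : (p + r) * (p + r) = p + r) :
    p * r = 0 := by
  have hsum : p * r + r * p = 0 := by
    have expand : (p + r) * (p + r) = p + (p * r + r * p) + r := by
      rw [add_mul, mul_add, mul_add, hp, hr]; abel
    rw [expand] at hpr
    calc p * r + r * p = p + (p * r + r * p) + r - (p + r) := by abel
      _ = 0 := by rw [hpr]; abel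
  have e1 : p * r + p * r * p = 0 := by
    have := congrArg (fun y => p * y) hsum
    simpa [mul_add, ← mul_assoc, hp] using this
  have e2 : p * r * p + r * p = 0 := by
    have := congrArg (fun y => y * p) hsum
    simpa [add_mul, mul_assoc, hp] using this
  have e3 : p * r = r * p := by
    have a1 : p * r = -(p * r * p) := eq_neg_of_add_eq_zero_left e1
    have a2 : r * p = -(p * r * p) := eq_neg_of_add_eq_zero_right e2
    rw [a1, a2]
  rw [← e3] at hsum
  have e4 : (2 : ℂ) • (p * r) = 0 := by rw [two_smul]; exact hsum
  simpa using e4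

set_option maxHeartbeats 1000000 in
/-- Direct sum decomposition of the spectrum.  Let `X` be a complex Banach space,
`(π n)` bounded projections with nonzero, pairwise trivially intersecting ranges
`Xn n`, such that `P n = π 0 + ⋯ + π n` are projections commuting with `T`.
Put `Tn n = T ∘ P n` and let `Sn n` be the restriction of `T` to `Xn n`.
If `‖T - Tn n‖ → 0`, then `σ(T)` is the closure of the union of the `σ(Sn n)`. -/
theorem spectrum_eq_closure_iUnion_spectrum_restrictions
    {X : Type*} [NormedAddCommGroup X] [NormedSpace ℂ X] [CompleteSpace X]
    (T : X →L[ℂ] X)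
    (π : ℕ → X →L[ℂ] X)
    (hπ : ∀ n, (π n).comp (π n) = π n)
    (Xn : ℕ → Submodule ℂ X)
    (hXn : ∀ n, Xn n = LinearMap.range (π n : X →ₗ[ℂ] X))
    (hne : ∀ n, Xn n ≠ ⊥)
    (hdisj : ∀ n m, n ≠ m → Xn n ⊓ Xn m = ⊥)
    (P : ℕ → X →L[ℂ] X)
    (hP : ∀ n, P n = ∑ j ∈ Finset.range (n + 1), π j)
    (hPproj : ∀ n, (P n).comp (P n) = P n)
    (hcomm : ∀ n, T.comp (P n) = (P n).comp T)
    (Tn : ℕ → X →L[ℂ] X)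
    (hTn : ∀ n, Tn n = T.comp (P n))
    (hlim : Filter.Tendsto (fun n => ‖T - Tn n‖) Filter.atTop (nhds 0))
    (Sn : ∀ n, ↥(Xn n) →L[ℂ] ↥(Xn n))
    (hSn : ∀ n (x : Xn n), ((Sn n x : X)) = T x) :
    spectrum ℂ T = closure (⋃ n : ℕ, spectrum ℂ (Sn n)) := by
  classical
  -- X is nontrivial
  obtain ⟨b₀, hb₀mem, hb₀⟩ := Submodule.exists_mem_ne_zero_of_ne_bot (hne 0)
  haveI : Nontrivial X := ⟨b₀, 0, hb₀⟩
  -- multiplicative versions of hypotheses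
  have hπm : ∀ j, π j * π j = π j := fun j => by rw [mul_def]; exact hπ j
  have hPm : ∀ n, P n * P n = P n := fun n => by rw [mul_def]; exact hPproj n
  have hTPm : ∀ n, T * P n = P n * T := fun n => by rw [mul_def, mul_def]; exact hcomm n
  have hPsucc : ∀ n, P (n + 1) = P n + π (n + 1) := fun n => by
    rw [hP, hP, Finset.sum_range_succ]
  have hP0 : P 0 = π 0 := by rw [hP]; simp
  have hTπ : ∀ j, T * π j = π j * T := by
    intro j
    cases j with
    | zero => rw [← hP0]; exact hTPm 0
    | succ m =>
      have hd : π (m + 1) = P (m + 1) - P m := by rw [hPsucc]; abel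
      rw [hd, mul_sub, sub_mul, hTPm, hTPm]
  -- P n annihilates π (n+1)
  have hPπ : ∀ n, P n * π (n + 1) = 0 := by
    intro n
    refine idem_sum_mul_eq_zero' (P n) (π (n + 1)) (hPm n) (hπm (n + 1)) ?_
    rw [← hPsucc]; exact hPm (n + 1)
  -- membership facts
  have hmemπ : ∀ j x, π j x ∈ Xn j := fun j x => by rw [hXn]; exact ⟨x, rfl⟩
  have hfix : ∀ j (x : X), x ∈ Xn j → π j x = x := by
    intro j x hx
    rw [hXn] at hx
    obtain ⟨y, rfl⟩ := hx
    have := congrArg (fun f : X →L[ℂ] X => f y) (hπ j)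
    simpa using this
  have hclosed : ∀ j, IsClosed (Xn j : Set X) := by
    intro j
    have hset : (Xn j : Set X) = {x | π j x = x} := by
      ext x
      constructor
      · exact fun hx => hfix j x hx
      · intro hx
        have : x = π j x := hx.symm
        rw [this]; exact hmemπ j x
    rw [hset]
    exact isClosed_eq (π j).continuous continuous_id
  -- each σ(Sn j) ⊆ σ(T)
  have hsub : ∀ j, spectrum ℂ (Sn j) ⊆ spectrum ℂ T := by
    intro j z hz
    by_contra hzT
    rw [spectrum.notMem_iff] at hzT
    set L : X →L[ℂ] X := algebraMap ℂ (X →L[ℂ] X) z - T with hL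
    set W : X →L[ℂ] X := ↑hzT.unit⁻¹ with hWdef
    have hW1 : L * W = 1 := hzT.mul_val_inv
    have hW2 : W * L = 1 := hzT.val_inv_mul
    have hcL : Commute (π j) L := by
      show π j * L = L * π j
      rw [hL, mul_sub, sub_mul, hTπ j, Algebra.commutes]
    have hcW : Commute (π j) W := by
      have h1 : Commute (π j) (hzT.unit : X →L[ℂ] X) := by
        rwa [IsUnit.unit_spec]
      exact h1.units_inv_right
    have hWmem : ∀ x : X, x ∈ Xn j → W x ∈ Xn j := by
      intro x hx
      have h1 : W x = π j (W x) := by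
        conv_lhs => rw [← hfix j x hx]
        have := congrArg (fun f : X →L[ℂ] X => f x) hcW.eq
        simpa [mul_apply_eq_comp] using this.symm
      rw [h1]; exact hmemπ j _
    set w : ↥(Xn j) →L[ℂ] ↥(Xn j) :=
      (W.comp (Xn j).subtypeL).codRestrict (Xn j) (fun x => hWmem _ x.2) with hw
    have key1 : (algebraMap ℂ (↥(Xn j) →L[ℂ] ↥(Xn j)) z - Sn j) * w = 1 := by
      ext x
      have hLW := congrArg (fun f : X →L[ℂ] X => f (x : X)) hW1
      simp only [hL, mul_apply_eq_comp, one_apply_eq_self, sub_apply, Algebra.algebraMap_eq_smul_one,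
        smul_apply] at hLW
      simp only [mul_apply_eq_comp, one_apply_eq_self, sub_apply, Algebra.algebraMap_eq_smul_one, smul_apply,
        hw, coe_codRestrict_apply, comp_apply, Submodule.subtypeL_apply,
        AddSubgroupClass.coe_sub, SetLike.val_smul, hSn]
      exact hLW
    have key2 : w * (algebraMap ℂ (↥(Xn j) →L[ℂ] ↥(Xn j)) z - Sn j) = 1 := by
      ext x
      have hWL := congrArg (fun f : X →L[ℂ] X => f (x : X)) hW2
      simp only [hL, mul_apply_eq_comp, one_apply_eq_self, sub_apply, Algebra.algebraMap_eq_smul_one,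
        smul_apply] at hWL
      simp only [mul_apply_eq_comp, one_apply_eq_self, sub_apply, Algebra.algebraMap_eq_smul_one, smul_apply,
        hw, coe_codRestrict_apply, comp_apply, Submodule.subtypeL_apply,
        AddSubgroupClass.coe_sub, SetLike.val_smul, hSn]
      show W (((z • x - Sn j x : ↥(Xn j))) : X) = x
      simpa [hSn] using hWL
    rw [spectrum.mem_iff] at hz
    exact hz (isUnit_iff_exists.mpr ⟨w, key1, key2⟩)
  apply subset_antisymm
  · -- hard direction
    intro z hzT
    by_contra hzc
    -- 0 is always in the closure
    have hz0 : (0 : ℂ) ∈ closure (⋃ n : ℕ, spectrum ℂ (Sn n)) := by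
      rw [Metric.mem_closure_iff]
      intro ε hε
      obtain ⟨n, hn⟩ := (hlim.eventually (gt_mem_nhds hε)).exists
      haveI : CompleteSpace ↥(Xn (n + 1)) := (hclosed (n + 1)).completeSpace_coe
      obtain ⟨b, hbmem, hb0⟩ := Submodule.exists_mem_ne_zero_of_ne_bot (hne (n + 1))
      haveI : Nontrivial ↥(Xn (n + 1)) :=
        ⟨⟨b, hbmem⟩, 0, by simp [Subtype.ext_iff, hb0]⟩
      haveI : Nontrivial (↥(Xn (n + 1)) →L[ℂ] ↥(Xn (n + 1))) := by
        refine ⟨1, 0, fun h => hb0 ?_⟩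
        have := congrArg (fun f : ↥(Xn (n + 1)) →L[ℂ] ↥(Xn (n + 1)) => f ⟨b, hbmem⟩) h
        simpa [Subtype.ext_iff] using this
      obtain ⟨μ, hμ⟩ := spectrum.nonempty (Sn (n + 1))
      refine ⟨μ, Set.mem_iUnion.mpr ⟨n + 1, hμ⟩, ?_⟩
      have hnorm : ‖Sn (n + 1)‖ ≤ ‖T - Tn n‖ := by
        refine opNorm_le_bound _ (norm_nonneg _) fun x => ?_
        have hPx : P n (x : X) = 0 := by
          have h1 := congrArg (fun f : X →L[ℂ] X => f (x : X)) (hPπ n)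
          simp only [mul_apply_eq_comp, zero_apply] at h1
          rwa [hfix (n + 1) _ x.2] at h1
        have h2 : ‖(Sn (n + 1) x : X)‖ = ‖(T - Tn n) (x : X)‖ := by
          rw [hSn]
          congr 1
          simp [sub_apply, hTn, comp_apply, hPx]
        calc ‖Sn (n + 1) x‖ = ‖(Sn (n + 1) x : X)‖ := rfl
          _ = ‖(T - Tn n) (x : X)‖ := h2
          _ ≤ ‖T - Tn n‖ * ‖(x : X)‖ := le_opNorm _ _
          _ = ‖T - Tn n‖ * ‖x‖ := rfl
      have hμn : ‖μ‖ ≤ ‖Sn (n + 1)‖ := spectrum.norm_le_norm_of_mem hμ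
      rw [dist_zero_left]
      linarith
    have hzne : z ≠ 0 := fun h => hzc (h ▸ hz0)
    have hzpos : (0 : ℝ) < ‖z‖ := norm_pos_iff.mpr hzne
    obtain ⟨n, hn⟩ := (hlim.eventually (gt_mem_nhds hzpos)).exists
    have hzK : ∀ j, z ∉ spectrum ℂ (Sn j) := fun j h =>
      hzc (subset_closure (Set.mem_iUnion.mpr ⟨j, h⟩))
    have hunit : ∀ j, IsUnit (algebraMap ℂ (↥(Xn j) →L[ℂ] ↥(Xn j)) z - Sn j) :=
      fun j => spectrum.notMem_iff.mp (hzK j)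
    set q : X →L[ℂ] X := 1 - P n with hq
    have hqq : q * q = q := by
      have : (1 - P n) * (1 - P n) = 1 - P n - P n + P n * P n := by noncomm_ring
      rw [hq, this, hPm n]; abel
    have hqT : q * T = T * q := by
      rw [hq, sub_mul, mul_sub, one_mul, mul_one, hTPm n]
    have htail : T * q = T - Tn n := by
      rw [hq, mul_sub, mul_one, hTn n, mul_def]
    clear_value q
    have hu : IsUnit (algebraMap ℂ (X →L[ℂ] X) z - T * q) := by
      by_contra h
      have h1 : z ∈ spectrum ℂ (T * q) := spectrum.mem_iff.mpr h
      have h2 := spectrum.norm_le_norm_of_mem h1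
      rw [htail] at h2
      linarith
    set u : X →L[ℂ] X := algebraMap ℂ (X →L[ℂ] X) z - T * q with hudef
    set V : X →L[ℂ] X := ↑hu.unit⁻¹ with hVdef
    have hV1 : u * V = 1 := hu.mul_val_inv
    have hV2 : V * u = 1 := hu.val_inv_mul
    clear_value V
    have hqTq : q * (T * q) = T * q := by
      rw [← mul_assoc, hqT, mul_assoc, hqq]
    have hTqq : (T * q) * q = T * q := by rw [mul_assoc, hqq]
    have hcu : Commute q u := by
      show q * u = u * q
      rw [hudef, mul_sub, sub_mul, hqTq, hTqq, Algebra.commutes]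
    have hcV : Commute q V := by
      have h1 : Commute q (hu.unit : X →L[ℂ] X) := by rwa [IsUnit.unit_spec]
      rw [hVdef]
      exact h1.units_inv_right
    set L : X →L[ℂ] X := algebraMap ℂ (X →L[ℂ] X) z - T with hLdef
    have hLq : L * q = u * q := by
      rw [hLdef, hudef, sub_mul, sub_mul, hTqq]
    have hqL : q * L = u * q := by
      rw [hLdef, hudef, mul_sub, sub_mul, hqT, hTqq, ← Algebra.commutes]
    -- the candidate inverse
    set ρ : ∀ j, X →L[ℂ] ↥(Xn j) := fun j => (π j).codRestrict (Xn j) (hmemπ j) with hρ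
    set v : ∀ j, ↥(Xn j) →L[ℂ] ↥(Xn j) := fun j => ↑(hunit j).unit⁻¹ with hv
    have hv1 : ∀ j, (algebraMap ℂ (↥(Xn j) →L[ℂ] ↥(Xn j)) z - Sn j) * v j = 1 :=
      fun j => (hunit j).mul_val_inv
    have hv2 : ∀ j, v j * (algebraMap ℂ (↥(Xn j) →L[ℂ] ↥(Xn j)) z - Sn j) = 1 :=
      fun j => (hunit j).val_inv_mul
    set R : X →L[ℂ] X :=
      (∑ j ∈ Finset.range (n + 1), (Xn j).subtypeL.comp ((v j).comp (ρ j))) + V * q with hR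
    -- L * R = 1
    have hLRj : ∀ j, L * ((Xn j).subtypeL.comp ((v j).comp (ρ j))) = π j := by
      intro j
      ext x
      have h1 := congrArg (fun f : ↥(Xn j) →L[ℂ] ↥(Xn j) => f (ρ j x)) (hv1 j)
      simp only [mul_apply_eq_comp, one_apply_eq_self, sub_apply, Algebra.algebraMap_eq_smul_one,
        smul_apply] at h1
      have h2 := congrArg (fun y : ↥(Xn j) => (y : X)) h1
      simp only [AddSubgroupClass.coe_sub, SetLike.val_smul, hSn, coe_codRestrict_apply] at h2
      simp only [mul_apply_eq_comp, comp_apply, Submodule.subtypeL_apply, hLdef, sub_apply,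
        Algebra.algebraMap_eq_smul_one, smul_apply, one_apply_eq_self]
      exact h2
    have hLR : L * R = 1 := by
      rw [hR, mul_add, Finset.mul_sum]
      have h1 : ∑ j ∈ Finset.range (n + 1),
          L * ((Xn j).subtypeL.comp ((v j).comp (ρ j))) = P n := by
        rw [Finset.sum_congr rfl fun j _ => hLRj j, ← hP]
      have h2 : L * (V * q) = q := by
        calc L * (V * q) = L * (q * V) := by rw [hcV.eq]
          _ = (L * q) * V := by rw [mul_assoc]
          _ = (u * q) * V := by rw [hLq]
          _ = u * (V * q) := by rw [mul_assoc, hcV.eq]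
          _ = (u * V) * q := by rw [mul_assoc]
          _ = q := by rw [hV1, one_mul]
      rw [h1, h2, hq]
      abel
    -- R * L = 1
    have hRjL : ∀ j, ((Xn j).subtypeL.comp ((v j).comp (ρ j))) * L = π j := by
      intro j
      ext x
      have hρL : ρ j (L x) = (algebraMap ℂ (↥(Xn j) →L[ℂ] ↥(Xn j)) z - Sn j) (ρ j x) := by
        apply Subtype.ext
        have hπT := congrArg (fun f : X →L[ℂ] X => f x) (hTπ j)
        simp only [mul_apply_eq_comp] at hπT
        simp only [hρ, coe_codRestrict_apply, hLdef, sub_apply, Algebra.algebraMap_eq_smul_one,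
          smul_apply, one_apply_eq_self, AddSubgroupClass.coe_sub, SetLike.val_smul, hSn,
          map_sub, map_smul]
        rw [← hπT]
      have h1 := congrArg (fun f : ↥(Xn j) →L[ℂ] ↥(Xn j) => f (ρ j x)) (hv2 j)
      simp only [mul_apply_eq_comp, one_apply_eq_self] at h1
      simp only [mul_apply_eq_comp, comp_apply, Submodule.subtypeL_apply, hρL, h1]
      simp only [hρ, coe_codRestrict_apply]
    have hRL : R * L = 1 := by
      rw [hR, add_mul, Finset.sum_mul]
      have h1 : ∑ j ∈ Finset.range (n + 1),
          ((Xn j).subtypeL.comp ((v j).comp (ρ j))) * L = P n := by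
        rw [Finset.sum_congr rfl fun j _ => hRjL j, ← hP]
      have h2 : (V * q) * L = q := by
        calc (V * q) * L = V * (q * L) := by rw [mul_assoc]
          _ = V * (u * q) := by rw [hqL]
          _ = (V * u) * q := by rw [mul_assoc]
          _ = q := by rw [hV2, one_mul]
      rw [h1, h2, hq]
      abel
    rw [spectrum.mem_iff] at hzT
    exact hzT (isUnit_iff_exists.mpr ⟨R, hLR, hRL⟩)
  · exact closure_minimal (Set.iUnion_subset hsub) (spectrum.isClosed T)
end

section
/- Under the assumptions of the preceding direct-sum setting, if ‖T - T_n‖ → 0 then 0 belongs to the closure of the union of the spectra σ(S_n) of the restrictions S_n = T|_{X_n}. -/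
set_option synthInstance.maxHeartbeats 1000000
set_option maxHeartbeats 1000000


/-- Direct sum decomposition of the spectrum.  Let `X` be a complex Banach space,
`(π n)` bounded projections with nonzero, pairwise trivially intersecting ranges
`Xn n`, such that `P n = π 0 + ⋯ + π n` are projections commuting with `T`.
Put `Tn n = T ∘ P n` and let `Sn n` be the restriction of `T` to `Xn n`.
If `‖T - Tn n‖ → 0`, then `σ(T)` is the closure of the union of the `σ(Sn n)`. -/
theorem zero_mem_closure_iUnion_spectrum_restrictions
    {X : Type*} [NormedAddCommGroup X] [NormedSpace ℂ X] [CompleteSpace X]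
    (T : X →L[ℂ] X)
    (π : ℕ → X →L[ℂ] X)
    (hπ : ∀ n, (π n).comp (π n) = π n)
    (Xn : ℕ → Submodule ℂ X)
    (hXn : ∀ n, Xn n = LinearMap.range (π n : X →ₗ[ℂ] X))
    (hne : ∀ n, Xn n ≠ ⊥)
    (hdisj : ∀ n m, n ≠ m → Xn n ⊓ Xn m = ⊥)
    (P : ℕ → X →L[ℂ] X)
    (hP : ∀ n, P n = ∑ j ∈ Finset.range (n + 1), π j)
    (hPproj : ∀ n, (P n).comp (P n) = P n)
    (hcomm : ∀ n, T.comp (P n) = (P n).comp T)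
    (Tn : ℕ → X →L[ℂ] X)
    (hTn : ∀ n, Tn n = T.comp (P n))
    (hlim : Filter.Tendsto (fun n => ‖T - Tn n‖) Filter.atTop (nhds 0))
    (Sn : ∀ n, ↥(Xn n) →L[ℂ] ↥(Xn n))
    (hSn : ∀ n (x : Xn n), ((Sn n x : X)) = T x) :
    (0 : ℂ) ∈ closure (⋃ n : ℕ, spectrum ℂ (Sn n)) := by

  -- Every `Xn n` is closed, hence complete.
  have hcl : ∀ n, IsClosed ((Xn n : Set X)) := by
    intro n
    have hker : Xn n = LinearMap.ker ((ContinuousLinearMap.id ℂ X - π n : X →L[ℂ] X) : X →ₗ[ℂ] X) := by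
      rw [hXn]
      ext x
      simp only [LinearMap.mem_range, LinearMap.mem_ker, ContinuousLinearMap.coe_coe,
        ContinuousLinearMap.sub_apply, ContinuousLinearMap.id_apply, sub_eq_zero]
      constructor
      · rintro ⟨y, rfl⟩
        have := ContinuousLinearMap.ext_iff.mp (hπ n) y
        simpa [ContinuousLinearMap.comp_apply] using this.symm
      · intro h
        exact ⟨x, h.symm⟩
    rw [hker]
    exact ContinuousLinearMap.isClosed_ker _
  -- elements of `Xn n` are fixed by `π n`
  have hfix : ∀ n (x : Xn n), π n (x : X) = (x : X) := by
    intro n x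
    have hx : (x : X) ∈ LinearMap.range (π n : X →ₗ[ℂ] X) := by
      rw [← hXn]; exact x.2
    obtain ⟨y, hy⟩ := hx
    rw [← hy]
    have := ContinuousLinearMap.ext_iff.mp (hπ n) y
    simpa [ContinuousLinearMap.comp_apply] using this
  -- norm bound on `Sn n`
  have hSnorm : ∀ n, ‖Sn n‖ ≤ ‖T.comp (π n)‖ := by
    intro n
    refine ContinuousLinearMap.opNorm_le_bound _ (norm_nonneg _) fun x => ?_
    have h1 : ‖Sn n x‖ = ‖T (π n (x : X))‖ := by
      rw [hfix n x]
      have : ((Sn n x : X)) = T (x : X) := hSn n x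
      rw [show ‖Sn n x‖ = ‖((Sn n x : X))‖ from rfl, this]
    rw [h1, show ‖x‖ = ‖(x : X)‖ from rfl]
    exact (T.comp (π n)).le_opNorm (x : X)
  -- each spectrum is nonempty
  have hspec : ∀ n, (spectrum ℂ (Sn n)).Nonempty := by
    intro n
    haveI := (hcl n).completeSpace_coe
    haveI : Nontrivial (Xn n) := Submodule.nontrivial_iff_ne_bot.mpr (hne n)
    exact spectrum.nonempty (Sn n)
  choose lam hlam using hspec
  -- telescoping: `T ∘ π (m+1) = Tn (m+1) - Tn m`
  have htel : ∀ m : ℕ, T.comp (π (m + 1)) = Tn (m + 1) - Tn m := by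
    intro m
    have hPs : P (m + 1) = P m + π (m + 1) := by
      rw [hP, hP, Finset.sum_range_succ]
    rw [hTn, hTn, hPs, ContinuousLinearMap.comp_add]
    abel
  -- norm bound for `lam n`, `n ≥ 1`
  have hbound : ∀ n : ℕ, 1 ≤ n → ‖lam n‖ ≤ ‖T - Tn n‖ + ‖T - Tn (n - 1)‖ := by
    intro n hn
    obtain ⟨m, rfl⟩ := Nat.exists_eq_add_of_le hn
    haveI := (hcl (1 + m)).completeSpace_coe
    haveI : Nontrivial (Xn (1 + m)) := Submodule.nontrivial_iff_ne_bot.mpr (hne (1 + m))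
    haveI : NormOneClass (↥(Xn (1 + m)) →L[ℂ] ↥(Xn (1 + m))) := by infer_instance
    have h1 : ‖lam (1 + m)‖ ≤ ‖Sn (1 + m)‖ :=
      spectrum.norm_le_norm_of_mem (𝕜 := ℂ) (A := ↥(Xn (1 + m)) →L[ℂ] ↥(Xn (1 + m))) (hlam _)
    have h2 : ‖Sn (1 + m)‖ ≤ ‖T.comp (π (1 + m))‖ := hSnorm _
    have h3 : T.comp (π (1 + m)) = (T - Tn (1 + m - 1)) - (T - Tn (1 + m)) := by
      have : (1 : ℕ) + m = m + 1 := by omega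
      rw [this]
      rw [htel m]
      simp only [Nat.add_sub_cancel]
      abel
    have h4 : ‖T.comp (π (1 + m))‖ ≤ ‖T - Tn (1 + m)‖ + ‖T - Tn (1 + m - 1)‖ := by
      rw [h3]
      calc ‖(T - Tn (1 + m - 1)) - (T - Tn (1 + m))‖
          ≤ ‖T - Tn (1 + m - 1)‖ + ‖T - Tn (1 + m)‖ := norm_sub_le _ _
        _ = ‖T - Tn (1 + m)‖ + ‖T - Tn (1 + m - 1)‖ := by ring
    exact le_trans h1 (le_trans h2 h4)
  -- the bound tends to zero
  have hshift : Filter.Tendsto (fun n => ‖T - Tn (n - 1)‖) Filter.atTop (nhds 0) :=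
    hlim.comp (Filter.tendsto_sub_atTop_nat 1)
  have hgb : Filter.Tendsto (fun n => ‖T - Tn n‖ + ‖T - Tn (n - 1)‖) Filter.atTop (nhds 0) := by
    simpa using hlim.add hshift
  have hlamnorm : Filter.Tendsto (fun n => ‖lam n‖) Filter.atTop (nhds 0) := by
    refine squeeze_zero' (Filter.Eventually.of_forall fun n => norm_nonneg _) ?_ hgb
    filter_upwards [Filter.eventually_ge_atTop 1] with n hn
    exact hbound n hn
  have hlamten : Filter.Tendsto lam Filter.atTop (nhds (0 : ℂ)) :=
    tendsto_zero_iff_norm_tendsto_zero.mpr hlamnorm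
  exact mem_closure_of_tendsto hlamten
    (Filter.Eventually.of_forall fun n => Set.mem_iUnion.mpr ⟨n, hlam n⟩)
end

section
/- Let H and K be complex Hilbert spaces and S ∈ L(H), T ∈ L(K) bounded operators. Then the spectrum of S ⊗ T on the Hilbert tensor product H ⊗̂ K equals { η·ζ : η ∈ σ(S), ζ ∈ σ(T) }. -/
open scoped InnerProductSpace

/-- An abstract presentation of the Hilbert tensor product `H ⊗̂ K`: a Hilbert
space `HK` with a map `emb` sending `(x, y)` to the elementary tensor `x ⊗ y`,
such that `⟪x ⊗ y, x' ⊗ y'⟫ = ⟪x, x'⟫ ⟪y, y'⟫` and elementary tensors span a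
dense subspace. -/
structure TensorProdStructure (H K HK : Type*) [NormedAddCommGroup H]
    [InnerProductSpace ℂ H] [NormedAddCommGroup K] [InnerProductSpace ℂ K]
    [NormedAddCommGroup HK] [InnerProductSpace ℂ HK] where
  emb : H → K → HK
  inner_emb : ∀ (x x' : H) (y y' : K),
    ⟪emb x y, emb x' y'⟫_ℂ = ⟪x, x'⟫_ℂ * ⟪y, y'⟫_ℂ
  dense_span : Dense ((Submodule.span ℂ
    (Set.range fun p : H × K => emb p.1 p.2) : Submodule ℂ HK) : Set HK)

namespace TensorProdStructure

set_option linter.unusedSectionVars false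

variable {H K HK : Type*}
    [NormedAddCommGroup H] [InnerProductSpace ℂ H] [CompleteSpace H]
    [NormedAddCommGroup K] [InnerProductSpace ℂ K] [CompleteSpace K]
    [NormedAddCommGroup HK] [InnerProductSpace ℂ HK] [CompleteSpace HK]
    (tp : TensorProdStructure H K HK)

lemma emb_add_left (x x' : H) (y : K) :
    tp.emb (x + x') y = tp.emb x y + tp.emb x' y := by
  have h : ⟪tp.emb (x + x') y - (tp.emb x y + tp.emb x' y),
      tp.emb (x + x') y - (tp.emb x y + tp.emb x' y)⟫_ℂ = 0 := by
    simp only [inner_sub_left, inner_sub_right, inner_add_left, inner_add_right, tp.inner_emb]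
    ring
  rw [inner_self_eq_zero, sub_eq_zero] at h
  exact h

lemma emb_add_right (x : H) (y y' : K) :
    tp.emb x (y + y') = tp.emb x y + tp.emb x y' := by
  have h : ⟪tp.emb x (y + y') - (tp.emb x y + tp.emb x y'),
      tp.emb x (y + y') - (tp.emb x y + tp.emb x y')⟫_ℂ = 0 := by
    simp only [inner_sub_left, inner_sub_right, inner_add_left, inner_add_right, tp.inner_emb]
    ring
  rw [inner_self_eq_zero, sub_eq_zero] at h
  exact h

lemma emb_smul_left (c : ℂ) (x : H) (y : K) :
    tp.emb (c • x) y = c • tp.emb x y := by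
  have h : ⟪tp.emb (c • x) y - c • tp.emb x y,
      tp.emb (c • x) y - c • tp.emb x y⟫_ℂ = 0 := by
    simp only [inner_sub_left, inner_sub_right, inner_smul_left, inner_smul_right, tp.inner_emb]
    ring
  rw [inner_self_eq_zero, sub_eq_zero] at h
  exact h

lemma emb_smul_right (c : ℂ) (x : H) (y : K) :
    tp.emb x (c • y) = c • tp.emb x y := by
  have h : ⟪tp.emb x (c • y) - c • tp.emb x y,
      tp.emb x (c • y) - c • tp.emb x y⟫_ℂ = 0 := by
    simp only [inner_sub_left, inner_sub_right, inner_smul_left, inner_smul_right, tp.inner_emb]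
    ring
  rw [inner_self_eq_zero, sub_eq_zero] at h
  exact h

lemma norm_emb (x : H) (y : K) : ‖tp.emb x y‖ = ‖x‖ * ‖y‖ := by
  have h : ⟪tp.emb x y, tp.emb x y⟫_ℂ = ⟪x, x⟫_ℂ * ⟪y, y⟫_ℂ := tp.inner_emb x x y y
  rw [inner_self_eq_norm_sq_to_K, inner_self_eq_norm_sq_to_K, inner_self_eq_norm_sq_to_K] at h
  have h2 : ‖tp.emb x y‖ ^ 2 = (‖x‖ * ‖y‖) ^ 2 := by
    norm_cast at h
    nlinarith [h]
  nlinarith [norm_nonneg (tp.emb x y), norm_nonneg x, norm_nonneg y,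
    mul_nonneg (norm_nonneg x) (norm_nonneg y)]

/-- The span of elementary tensors. -/
def V : Submodule ℂ HK := Submodule.span ℂ (Set.range fun p : H × K => tp.emb p.1 p.2)

lemma dense_V : Dense (tp.V : Set HK) := tp.dense_span

lemma emb_mem_V (x : H) (y : K) : tp.emb x y ∈ tp.V :=
  Submodule.subset_span ⟨(x, y), rfl⟩

/-- `emb` as a bilinear map. -/
noncomputable def embL : H →ₗ[ℂ] K →ₗ[ℂ] HK :=
  LinearMap.mk₂ ℂ tp.emb tp.emb_add_left tp.emb_smul_left tp.emb_add_right tp.emb_smul_right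

/-- The canonical map from the algebraic tensor product into `HK`. -/
noncomputable def eps : TensorProduct ℂ H K →ₗ[ℂ] HK := TensorProduct.lift tp.embL

@[simp] lemma eps_tmul (x : H) (y : K) : tp.eps (x ⊗ₜ[ℂ] y) = tp.emb x y := rfl

lemma eps_mem_V (t : TensorProduct ℂ H K) : tp.eps t ∈ tp.V := by
  induction t using TensorProduct.induction_on with
  | zero => simp
  | tmul x y => simpa using tp.emb_mem_V x y
  | add a b ha hb => rw [map_add]; exact add_mem ha hb

lemma exists_eps_eq (v : HK) (hv : v ∈ tp.V) : ∃ t, tp.eps t = v := by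
  induction hv using Submodule.span_induction with
  | mem v hv => obtain ⟨p, rfl⟩ := hv; exact ⟨p.1 ⊗ₜ[ℂ] p.2, rfl⟩
  | zero => exact ⟨0, map_zero _⟩
  | add x y hx hy ihx ihy =>
      obtain ⟨t, rfl⟩ := ihx; obtain ⟨s, rfl⟩ := ihy; exact ⟨t + s, map_add _ _ _⟩
  | smul c x hx ihx => obtain ⟨t, rfl⟩ := ihx; exact ⟨c • t, map_smul _ _ _⟩

/-- Tensor product of operators, on the algebraic tensor product. -/
noncomputable def mapL (P : H →L[ℂ] H) (Q : K →L[ℂ] K) :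
    TensorProduct ℂ H K →ₗ[ℂ] TensorProduct ℂ H K :=
  TensorProduct.map (P : H →ₗ[ℂ] H) (Q : K →ₗ[ℂ] K)

@[simp] lemma mapL_tmul (P : H →L[ℂ] H) (Q : K →L[ℂ] K) (x : H) (y : K) :
    mapL P Q (x ⊗ₜ[ℂ] y) = (P x) ⊗ₜ[ℂ] (Q y) := rfl

lemma mapL_mapL (P P' : H →L[ℂ] H) (Q Q' : K →L[ℂ] K) (t : TensorProduct ℂ H K) :
    mapL P Q (mapL P' Q' t) = mapL (P * P') (Q * Q') t := by
  have := TensorProduct.map_comp (P : H →ₗ[ℂ] H) (Q : K →ₗ[ℂ] K)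
    (P' : H →ₗ[ℂ] H) (Q' : K →ₗ[ℂ] K)
  have h2 : mapL (P * P') (Q * Q') =
      (TensorProduct.map (P : H →ₗ[ℂ] H) (Q : K →ₗ[ℂ] K)).comp
        (TensorProduct.map (P' : H →ₗ[ℂ] H) (Q' : K →ₗ[ℂ] K)) := by
    rw [mapL, ContinuousLinearMap.mul_def, ContinuousLinearMap.mul_def,
      ContinuousLinearMap.toLinearMap_comp, ContinuousLinearMap.toLinearMap_comp, this]
  rw [h2]; rfl

open ContinuousLinearMap in
lemma inner_eps_map (P : H →L[ℂ] H) (Q : K →L[ℂ] K) (t s : TensorProduct ℂ H K) :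
    ⟪tp.eps (mapL P Q t), tp.eps s⟫_ℂ
      = ⟪tp.eps t, tp.eps (mapL (adjoint P) (adjoint Q) s)⟫_ℂ := by
  induction t using TensorProduct.induction_on with
  | zero => simp
  | tmul x y =>
      induction s using TensorProduct.induction_on with
      | zero => simp
      | tmul x' y' =>
          simp only [mapL_tmul, eps_tmul, tp.inner_emb]
          rw [adjoint_inner_right, adjoint_inner_right]
      | add a b ha hb =>
          simp only [map_add, inner_add_right] at *
          rw [ha, hb]
  | add a b ha hb =>
      simp only [map_add, inner_add_left] at *
      rw [ha, hb]

lemma exists_crude_bound (t : TensorProduct ℂ H K) :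
    ∃ c : ℝ, 0 ≤ c ∧ ∀ (P : H →L[ℂ] H) (Q : K →L[ℂ] K),
      ‖tp.eps (mapL P Q t)‖ ≤ c * (‖P‖ * ‖Q‖) := by
  induction t using TensorProduct.induction_on with
  | zero => exact ⟨0, le_refl _, by simp⟩
  | tmul x y =>
      refine ⟨‖x‖ * ‖y‖, mul_nonneg (norm_nonneg _) (norm_nonneg _), fun P Q => ?_⟩
      rw [mapL_tmul, eps_tmul, tp.norm_emb]
      have h1 := P.le_opNorm x
      have h2 := Q.le_opNorm y
      nlinarith [norm_nonneg (P x), norm_nonneg (Q y), norm_nonneg x, norm_nonneg y,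
        norm_nonneg P, norm_nonneg Q]
  | add a b ha hb =>
      obtain ⟨c1, hc1, h1⟩ := ha; obtain ⟨c2, hc2, h2⟩ := hb
      refine ⟨c1 + c2, by linarith, fun P Q => ?_⟩
      rw [map_add, map_add]
      calc ‖tp.eps (mapL P Q a) + tp.eps (mapL P Q b)‖
          ≤ ‖tp.eps (mapL P Q a)‖ + ‖tp.eps (mapL P Q b)‖ := norm_add_le _ _
        _ ≤ c1 * (‖P‖ * ‖Q‖) + c2 * (‖P‖ * ‖Q‖) := add_le_add (h1 P Q) (h2 P Q)
        _ = (c1 + c2) * (‖P‖ * ‖Q‖) := by ring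


open ContinuousLinearMap in
theorem norm_eps_map_le (P : H →L[ℂ] H) (Q : K →L[ℂ] K) (t : TensorProduct ℂ H K) :
    ‖tp.eps (mapL P Q t)‖ ≤ ‖P‖ * ‖Q‖ * ‖tp.eps t‖ := by
  obtain ⟨c, hc0, hc⟩ := tp.exists_crude_bound t
  set r := ‖tp.eps t‖ with hr
  have hr0 : 0 ≤ r := norm_nonneg _
  set f : (H →L[ℂ] H) → (H →L[ℂ] H) := fun A => adjoint A * A with hf
  set g : (K →L[ℂ] K) → (K →L[ℂ] K) := fun A => adjoint A * A with hg
  set Pk : ℕ → (H →L[ℂ] H) := fun k => f^[k] P with hPk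
  set Qk : ℕ → (K →L[ℂ] K) := fun k => g^[k] Q with hQk
  set b : ℕ → ℝ := fun k => ‖tp.eps (mapL (Pk k) (Qk k) t)‖ with hb
  have hb0 : ∀ k, 0 ≤ b k := fun k => norm_nonneg _
  have hPksucc : ∀ k, Pk (k + 1) = adjoint (Pk k) * Pk k := by
    intro k; rw [hPk]; simp only [Function.iterate_succ_apply']; rfl
  have hQksucc : ∀ k, Qk (k + 1) = adjoint (Qk k) * Qk k := by
    intro k; rw [hQk]; simp only [Function.iterate_succ_apply']; rfl
  have hrec : ∀ k, (b k) ^ 2 ≤ r * b (k + 1) := by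
    intro k
    have h1 : ⟪tp.eps (mapL (Pk k) (Qk k) t), tp.eps (mapL (Pk k) (Qk k) t)⟫_ℂ
        = ⟪tp.eps t, tp.eps (mapL (Pk (k+1)) (Qk (k+1)) t)⟫_ℂ := by
      rw [tp.inner_eps_map, mapL_mapL, ← hPksucc, ← hQksucc]
    have h2 : (b k) ^ 2
        = ‖⟪tp.eps t, tp.eps (mapL (Pk (k+1)) (Qk (k+1)) t)⟫_ℂ‖ := by
      rw [← h1, inner_self_eq_norm_sq_to_K]
      simp
      rfl
    rw [h2]
    exact norm_inner_le_norm _ _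
  have hPknorm : ∀ k, ‖Pk k‖ ≤ ‖P‖ ^ (2 ^ k) := by
    intro k; induction k with
    | zero => simp [hPk]
    | succ k ih =>
        rw [hPksucc k]
        calc ‖adjoint (Pk k) * Pk k‖ ≤ ‖adjoint (Pk k)‖ * ‖Pk k‖ := norm_mul_le _ _
          _ = ‖Pk k‖ * ‖Pk k‖ := by
              rw [LinearIsometryEquiv.norm_map (adjoint (𝕜 := ℂ) (E := H) (F := H))]
          _ ≤ ‖P‖ ^ (2 ^ k) * ‖P‖ ^ (2 ^ k) :=
              mul_le_mul ih ih (norm_nonneg _) (le_trans (norm_nonneg _)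
                (le_trans ih (le_refl _)) |>.trans (le_refl _) |> fun _ => pow_nonneg (norm_nonneg _) _)
          _ = ‖P‖ ^ (2 ^ (k + 1)) := by rw [← pow_add]; ring_nf
  have hQknorm : ∀ k, ‖Qk k‖ ≤ ‖Q‖ ^ (2 ^ k) := by
    intro k; induction k with
    | zero => simp [hQk]
    | succ k ih =>
        rw [hQksucc k]
        calc ‖adjoint (Qk k) * Qk k‖ ≤ ‖adjoint (Qk k)‖ * ‖Qk k‖ := norm_mul_le _ _
          _ = ‖Qk k‖ * ‖Qk k‖ := by
              rw [LinearIsometryEquiv.norm_map (adjoint (𝕜 := ℂ) (E := K) (F := K))]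
          _ ≤ ‖Q‖ ^ (2 ^ k) * ‖Q‖ ^ (2 ^ k) :=
              mul_le_mul ih ih (norm_nonneg _) (pow_nonneg (norm_nonneg _) _)
          _ = ‖Q‖ ^ (2 ^ (k + 1)) := by rw [← pow_add]; ring_nf
  -- the goal is b 0 ≤ ‖P‖ * ‖Q‖ * r
  show b 0 ≤ ‖P‖ * ‖Q‖ * r
  rcases eq_or_lt_of_le hr0 with hre | hrpos
  · -- r = 0
    have h1 := hrec 0
    rw [← hre] at h1
    simp only [zero_mul] at h1
    have : b 0 = 0 := by nlinarith [hb0 0]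
    rw [this, ← hre]
    positivity
  rcases eq_or_lt_of_le (mul_nonneg (norm_nonneg P) (norm_nonneg Q)) with hPQ | hPQpos
  · -- ‖P‖ * ‖Q‖ = 0
    have := hc P Q
    rw [← hPQ, mul_zero] at this
    calc b 0 ≤ 0 := this
      _ ≤ ‖P‖ * ‖Q‖ * r := by rw [← hPQ]; simp
  -- main chain
  have claim : ∀ k, (b 0) ^ (2 ^ (k + 1)) * r ≤ r ^ (2 ^ (k + 1)) * b (k + 1) := by
    intro k; induction k with
    | zero =>
        have := hrec 0
        have h2 : (b 0) ^ (2 ^ 1) * r ≤ (r * b 1) * r := by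
          have := mul_le_mul_of_nonneg_right (hrec 0) hr0
          simpa [pow_succ] using this
        calc (b 0) ^ (2 ^ 1) * r ≤ (r * b 1) * r := h2
          _ = r ^ (2 ^ 1) * b 1 := by ring
    | succ k ih =>
        have hsq : ((b 0) ^ (2 ^ (k + 1)) * r) ^ 2 ≤ (r ^ (2 ^ (k + 1)) * b (k + 1)) ^ 2 := by
          apply pow_le_pow_left₀ (by positivity) ih
        have h3 : (b 0) ^ (2 ^ (k + 2)) * r ^ 2 ≤ r ^ (2 ^ (k + 2)) * (b (k + 1)) ^ 2 := by
          calc (b 0) ^ (2 ^ (k + 2)) * r ^ 2 = ((b 0) ^ (2 ^ (k + 1)) * r) ^ 2 := by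
                rw [mul_pow, ← pow_mul]; ring_nf
            _ ≤ (r ^ (2 ^ (k + 1)) * b (k + 1)) ^ 2 := hsq
            _ = r ^ (2 ^ (k + 2)) * (b (k + 1)) ^ 2 := by
                rw [mul_pow, ← pow_mul]; ring_nf
        have h4 : (b 0) ^ (2 ^ (k + 2)) * r ^ 2 ≤ r ^ (2 ^ (k + 2)) * (r * b (k + 2)) :=
          le_trans h3 (by
            apply mul_le_mul_of_nonneg_left (hrec (k + 1)) (by positivity))
        have h5 : (b 0) ^ (2 ^ (k + 2)) * r * r ≤ (r ^ (2 ^ (k + 2)) * b (k + 2)) * r := by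
          calc (b 0) ^ (2 ^ (k + 2)) * r * r = (b 0) ^ (2 ^ (k + 2)) * r ^ 2 := by ring
            _ ≤ r ^ (2 ^ (k + 2)) * (r * b (k + 2)) := h4
            _ = (r ^ (2 ^ (k + 2)) * b (k + 2)) * r := by ring
        exact le_of_mul_le_mul_right h5 hrpos
  -- combine with crude bound
  have final : ∀ k, (b 0) ^ (2 ^ (k + 1)) * r ≤ c * (‖P‖ * ‖Q‖ * r) ^ (2 ^ (k + 1)) := by
    intro k
    have h1 := claim k
    have h2 : b (k + 1) ≤ c * (‖P‖ ^ (2 ^ (k + 1)) * ‖Q‖ ^ (2 ^ (k + 1))) := by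
      calc b (k + 1) ≤ c * (‖Pk (k+1)‖ * ‖Qk (k+1)‖) := hc _ _
        _ ≤ c * (‖P‖ ^ (2 ^ (k + 1)) * ‖Q‖ ^ (2 ^ (k + 1))) := by
            apply mul_le_mul_of_nonneg_left _ hc0
            exact mul_le_mul (hPknorm _) (hQknorm _) (norm_nonneg _)
              (pow_nonneg (norm_nonneg _) _)
      
    calc (b 0) ^ (2 ^ (k + 1)) * r ≤ r ^ (2 ^ (k + 1)) * b (k + 1) := h1
      _ ≤ r ^ (2 ^ (k + 1)) * (c * (‖P‖ ^ (2 ^ (k + 1)) * ‖Q‖ ^ (2 ^ (k + 1)))) := by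
          apply mul_le_mul_of_nonneg_left h2 (by positivity)
      _ = c * (‖P‖ * ‖Q‖ * r) ^ (2 ^ (k + 1)) := by
          rw [mul_pow, mul_pow]; ring
  by_contra hcon
  push_neg at hcon
  set Y := ‖P‖ * ‖Q‖ * r with hY
  have hYpos : 0 < Y := by positivity
  have hδ : 1 < b 0 / Y := (one_lt_div hYpos).mpr hcon
  obtain ⟨n, hn⟩ := pow_unbounded_of_one_lt (c / r) hδ
  have hmn : n ≤ 2 ^ (n + 1) := le_of_lt (lt_of_lt_of_le (Nat.lt_two_pow_self (n := n))
    (Nat.pow_le_pow_right (by norm_num) (Nat.le_succ n)))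
  have hpow : (b 0 / Y) ^ n ≤ (b 0 / Y) ^ (2 ^ (n + 1)) :=
    pow_le_pow_right₀ hδ.le hmn
  have hfin := final n
  have hdiv : (b 0 / Y) ^ (2 ^ (n + 1)) ≤ c / r := by
    rw [div_pow, div_le_div_iff₀ (by positivity) hrpos]
    calc (b 0) ^ (2 ^ (n + 1)) * r ≤ c * Y ^ (2 ^ (n + 1)) := hfin
      _ = c * Y ^ (2 ^ (n + 1)) := rfl
  have := lt_of_lt_of_le hn (le_trans hpow hdiv)
  exact lt_irrefl _ this


lemma eps_map_congr (P : H →L[ℂ] H) (Q : K →L[ℂ] K) {t t' : TensorProduct ℂ H K}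
    (h : tp.eps t = tp.eps t') : tp.eps (mapL P Q t) = tp.eps (mapL P Q t') := by
  have h2 : ‖tp.eps (mapL P Q t) - tp.eps (mapL P Q t')‖
      ≤ ‖P‖ * ‖Q‖ * ‖tp.eps t - tp.eps t'‖ := by
    have := tp.norm_eps_map_le P Q (t - t')
    simpa only [map_sub] using this
  rw [h, sub_self, norm_zero, mul_zero] at h2
  have h3 : ‖tp.eps (mapL P Q t) - tp.eps (mapL P Q t')‖ = 0 :=
    le_antisymm h2 (norm_nonneg _)
  exact sub_eq_zero.mp (norm_eq_zero.mp h3)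

/-- The pre-version of the tensor product operator, on the span of elementary tensors. -/
noncomputable def opTensorAux (P : H →L[ℂ] H) (Q : K →L[ℂ] K) : tp.V →ₗ[ℂ] HK where
  toFun v := tp.eps (mapL P Q (Classical.choose (tp.exists_eps_eq v v.2)))
  map_add' v w := by
    have hv := Classical.choose_spec (tp.exists_eps_eq v v.2)
    have hw := Classical.choose_spec (tp.exists_eps_eq w w.2)
    have hvw := Classical.choose_spec (tp.exists_eps_eq (v + w) (v + w).2)
    have : tp.eps (Classical.choose (tp.exists_eps_eq (v + w) (v + w).2))
        = tp.eps (Classical.choose (tp.exists_eps_eq v v.2)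
            + Classical.choose (tp.exists_eps_eq w w.2)) := by
      rw [map_add, hv, hw, hvw]
    rw [tp.eps_map_congr P Q this, map_add, map_add]
  map_smul' c v := by
    have hv := Classical.choose_spec (tp.exists_eps_eq v v.2)
    have hcv := Classical.choose_spec (tp.exists_eps_eq (c • v) (c • v).2)
    have : tp.eps (Classical.choose (tp.exists_eps_eq (c • v) (c • v).2))
        = tp.eps (c • Classical.choose (tp.exists_eps_eq v v.2)) := by
      rw [map_smul, hv, hcv]
    rw [tp.eps_map_congr P Q this, map_smul, map_smul]; rfl

lemma opTensorAux_norm (P : H →L[ℂ] H) (Q : K →L[ℂ] K) (v : tp.V) :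
    ‖tp.opTensorAux P Q v‖ ≤ ‖P‖ * ‖Q‖ * ‖v‖ := by
  have hv := Classical.choose_spec (tp.exists_eps_eq v v.2)
  calc ‖tp.opTensorAux P Q v‖
      = ‖tp.eps (mapL P Q (Classical.choose (tp.exists_eps_eq v v.2)))‖ := rfl
    _ ≤ ‖P‖ * ‖Q‖ * ‖tp.eps (Classical.choose (tp.exists_eps_eq v v.2))‖ :=
        tp.norm_eps_map_le P Q _
    _ = ‖P‖ * ‖Q‖ * ‖v‖ := by rw [hv]; rfl

/-- The tensor product operator `P ⊗ Q` on `HK`. -/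
noncomputable def opTensor (P : H →L[ℂ] H) (Q : K →L[ℂ] K) : HK →L[ℂ] HK :=
  ((tp.opTensorAux P Q).mkContinuous (‖P‖ * ‖Q‖) (tp.opTensorAux_norm P Q)).extend
    tp.V.subtypeL

lemma opTensor_emb (P : H →L[ℂ] H) (Q : K →L[ℂ] K) (x : H) (y : K) :
    tp.opTensor P Q (tp.emb x y) = tp.emb (P x) (Q y) := by
  have hmem := tp.emb_mem_V x y
  have h0 : tp.emb x y = tp.V.subtypeL (⟨tp.emb x y, hmem⟩ : tp.V) := rfl
  rw [opTensor, h0, ContinuousLinearMap.extend_eq _ tp.dense_V.denseRange_val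
    isUniformEmbedding_subtype_val.isUniformInducing]
  have h1 : ((tp.opTensorAux P Q).mkContinuous (‖P‖ * ‖Q‖) (tp.opTensorAux_norm P Q))
      (⟨tp.emb x y, hmem⟩ : tp.V) = tp.opTensorAux P Q ⟨tp.emb x y, hmem⟩ := rfl
  rw [h1]
  show tp.eps (mapL P Q (Classical.choose
    (tp.exists_eps_eq (⟨tp.emb x y, hmem⟩ : tp.V) hmem))) = tp.emb (P x) (Q y)
  have hch := Classical.choose_spec (tp.exists_eps_eq (⟨tp.emb x y, hmem⟩ : tp.V) hmem)
  have : tp.eps (Classical.choose (tp.exists_eps_eq (⟨tp.emb x y, hmem⟩ : tp.V) hmem))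
      = tp.eps (x ⊗ₜ[ℂ] y) := by rw [hch, eps_tmul]
  rw [tp.eps_map_congr P Q this, mapL_tmul, eps_tmul]

/-- Two continuous linear maps agreeing on elementary tensors agree. -/
lemma ext_emb {X : Type*} [NormedAddCommGroup X] [NormedSpace ℂ X]
    {f g : HK →L[ℂ] X} (h : ∀ x y, f (tp.emb x y) = g (tp.emb x y)) : f = g := by
  have heqon : Set.EqOn f g (tp.V : Set HK) := by
    intro v hv
    induction hv using Submodule.span_induction with
    | mem v hv => obtain ⟨p, rfl⟩ := hv; exact h p.1 p.2
    | zero => simp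
    | add a b ha hb iha ihb => simp only [map_add, Set.mem_setOf_eq] at *; rw [iha, ihb]
    | smul c a ha iha => simp only [map_smul, Set.mem_setOf_eq] at *; rw [iha]
  have := Continuous.ext_on tp.dense_V f.continuous g.continuous heqon
  ext z
  exact congrFun this z

lemma eq_zero_of_inner_emb (v : HK) (h : ∀ x y, ⟪v, tp.emb x y⟫_ℂ = 0) : v = 0 := by
  have heqon : Set.EqOn (fun w => (⟪v, w⟫_ℂ)) (fun _ => (0 : ℂ)) (tp.V : Set HK) := by
    intro w hw
    induction hw using Submodule.span_induction with
    | mem w hw => obtain ⟨p, rfl⟩ := hw; exact h p.1 p.2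
    | zero => simp
    | add a b ha hb iha ihb =>
        simp only [inner_add_right, Set.mem_setOf_eq] at *
        rw [iha, ihb]; simp
    | smul c a ha iha =>
        simp only [inner_smul_right, Set.mem_setOf_eq] at *
        rw [iha]; simp
  have hall : ∀ w : HK, ⟪v, w⟫_ℂ = 0 := by
    have := Continuous.ext_on tp.dense_V (continuous_const.inner continuous_id)
      continuous_const heqon
    intro w
    exact congrFun this w
  have := hall v
  exact inner_self_eq_zero.mp this


open ContinuousLinearMap in
lemma adjoint_opTensor_emb (P : H →L[ℂ] H) (Q : K →L[ℂ] K) (x : H) (y : K) :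
    adjoint (tp.opTensor P Q) (tp.emb x y) = tp.emb (adjoint P x) (adjoint Q y) := by
  have h : ∀ x' y', ⟪adjoint (tp.opTensor P Q) (tp.emb x y)
      - tp.emb (adjoint P x) (adjoint Q y), tp.emb x' y'⟫_ℂ = 0 := by
    intro x' y'
    rw [inner_sub_left, adjoint_inner_left, tp.opTensor_emb, tp.inner_emb, tp.inner_emb,
      adjoint_inner_left, adjoint_inner_left, sub_self]
  exact sub_eq_zero.mp (tp.eq_zero_of_inner_emb _ h)

lemma opTensor_mul (P P' : H →L[ℂ] H) (Q Q' : K →L[ℂ] K) :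
    tp.opTensor P Q * tp.opTensor P' Q' = tp.opTensor (P * P') (Q * Q') := by
  apply tp.ext_emb
  intro x y
  rw [ContinuousLinearMap.mul_apply, tp.opTensor_emb, tp.opTensor_emb, tp.opTensor_emb,
    ContinuousLinearMap.mul_apply, ContinuousLinearMap.mul_apply]

lemma emb_sub_left (x x' : H) (y : K) :
    tp.emb (x - x') y = tp.emb x y - tp.emb x' y := by
  have h1 : x - x' = x + (-1 : ℂ) • x' := by
    rw [neg_one_smul]; abel
  rw [h1, tp.emb_add_left, tp.emb_smul_left, neg_one_smul]; abel

lemma emb_sub_right (x : H) (y y' : K) :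
    tp.emb x (y - y') = tp.emb x y - tp.emb x y' := by
  have h1 : y - y' = y + (-1 : ℂ) • y' := by
    rw [neg_one_smul]; abel
  rw [h1, tp.emb_add_right, tp.emb_smul_right, neg_one_smul]; abel

open ContinuousLinearMap in
lemma isUnit_opTensor_left {S : H →L[ℂ] H} {lam : ℂ}
    (hu : IsUnit (algebraMap ℂ (H →L[ℂ] H) lam - S)) :
    IsUnit (algebraMap ℂ (HK →L[ℂ] HK) lam - tp.opTensor S 1) := by
  obtain ⟨u, huu⟩ := hu
  set A := algebraMap ℂ (HK →L[ℂ] HK) lam - tp.opTensor S 1 with hA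
  set W := tp.opTensor (↑u⁻¹) 1 with hW
  have key : ∀ (x : H) (y : K), A (tp.emb x y)
      = tp.emb ((algebraMap ℂ (H →L[ℂ] H) lam - S) x) y := by
    intro x y
    rw [hA, sub_apply, Algebra.algebraMap_eq_smul_one, Algebra.algebraMap_eq_smul_one,
      smul_apply, ContinuousLinearMap.one_apply, tp.opTensor_emb, ContinuousLinearMap.one_apply, sub_apply, smul_apply, ContinuousLinearMap.one_apply,
      tp.emb_sub_left, tp.emb_smul_left]
  have h1 : A * W = 1 := by
    apply tp.ext_emb
    intro x y
    rw [ContinuousLinearMap.mul_apply, hW, tp.opTensor_emb, ContinuousLinearMap.one_apply, key, ContinuousLinearMap.one_apply, ← huu,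
      ← ContinuousLinearMap.mul_apply, Units.mul_inv, ContinuousLinearMap.one_apply]
  have h2 : W * A = 1 := by
    apply tp.ext_emb
    intro x y
    rw [ContinuousLinearMap.mul_apply, key, hW, tp.opTensor_emb, ContinuousLinearMap.one_apply, ContinuousLinearMap.one_apply, ← huu,
      ← ContinuousLinearMap.mul_apply, Units.inv_mul, ContinuousLinearMap.one_apply]
  exact ⟨⟨A, W, h1, h2⟩, rfl⟩

open ContinuousLinearMap in
lemma isUnit_opTensor_right {T : K →L[ℂ] K} {lam : ℂ}
    (hu : IsUnit (algebraMap ℂ (K →L[ℂ] K) lam - T)) :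
    IsUnit (algebraMap ℂ (HK →L[ℂ] HK) lam - tp.opTensor 1 T) := by
  obtain ⟨u, huu⟩ := hu
  set A := algebraMap ℂ (HK →L[ℂ] HK) lam - tp.opTensor 1 T with hA
  set W := tp.opTensor 1 (↑u⁻¹) with hW
  have key : ∀ (x : H) (y : K), A (tp.emb x y)
      = tp.emb x ((algebraMap ℂ (K →L[ℂ] K) lam - T) y) := by
    intro x y
    rw [hA, sub_apply, Algebra.algebraMap_eq_smul_one, Algebra.algebraMap_eq_smul_one,
      smul_apply, ContinuousLinearMap.one_apply, tp.opTensor_emb, ContinuousLinearMap.one_apply, sub_apply, smul_apply, ContinuousLinearMap.one_apply,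
      tp.emb_sub_right, tp.emb_smul_right]
  have h1 : A * W = 1 := by
    apply tp.ext_emb
    intro x y
    rw [ContinuousLinearMap.mul_apply, hW, tp.opTensor_emb, ContinuousLinearMap.one_apply, key, ContinuousLinearMap.one_apply, ← huu,
      ← ContinuousLinearMap.mul_apply, Units.mul_inv, ContinuousLinearMap.one_apply]
  have h2 : W * A = 1 := by
    apply tp.ext_emb
    intro x y
    rw [ContinuousLinearMap.mul_apply, key, hW, tp.opTensor_emb, ContinuousLinearMap.one_apply, ContinuousLinearMap.one_apply, ← huu,
      ← ContinuousLinearMap.mul_apply, Units.inv_mul, ContinuousLinearMap.one_apply]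
  exact ⟨⟨A, W, h1, h2⟩, rfl⟩

end TensorProdStructure


section Dichotomy

open ContinuousLinearMap

variable {E : Type*} [NormedAddCommGroup E] [InnerProductSpace ℂ E] [CompleteSpace E]

lemma approx_or_adjoint_eigen (X : E →L[ℂ] E) {lam : ℂ} (hl : lam ∈ spectrum ℂ X) :
    (∀ ε : ℝ, 0 < ε → ∃ v : E, ‖v‖ = 1 ∧ ‖X v - lam • v‖ < ε) ∨
    (∃ v : E, ‖v‖ = 1 ∧ adjoint X v = (starRingEnd ℂ) lam • v) := by
  by_cases happ : ∀ ε : ℝ, 0 < ε → ∃ v : E, ‖v‖ = 1 ∧ ‖X v - lam • v‖ < ε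
  · exact Or.inl happ
  right
  push_neg at happ
  obtain ⟨ε₀, hε₀, hbd⟩ := happ
  set Y := X - lam • (1 : E →L[ℂ] E) with hY
  have hYv : ∀ v, Y v = X v - lam • v := by
    intro v; rw [hY, sub_apply, smul_apply, ContinuousLinearMap.one_apply]
  have hlow : ∀ v, ε₀ * ‖v‖ ≤ ‖Y v‖ := by
    intro v
    rcases eq_or_ne v 0 with rfl | hv
    · simp
    · have hnv : (0 : ℝ) < ‖v‖ := norm_pos_iff.mpr hv
      set u := ((‖v‖⁻¹ : ℝ) : ℂ) • v with hu
      have hu1 : ‖u‖ = 1 := by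
        rw [hu, norm_smul]
        simp [norm_inv, abs_of_pos hnv]
        field_simp
      have h2 := hbd u hu1
      have h3 : X u - lam • u = ((‖v‖⁻¹ : ℝ) : ℂ) • (X v - lam • v) := by
        rw [hu, map_smul, smul_comm]
        rw [smul_sub]
      rw [h3, norm_smul] at h2
      have h4 : ‖(((‖v‖⁻¹ : ℝ)) : ℂ)‖ = ‖v‖⁻¹ := by
        simp [norm_inv, abs_of_pos hnv]
      rw [h4, ← hYv] at h2
      calc ε₀ * ‖v‖ ≤ (‖v‖⁻¹ * ‖Y v‖) * ‖v‖ := by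
            apply mul_le_mul_of_nonneg_right _ (le_of_lt hnv)
            exact h2
        _ = ‖Y v‖ := by field_simp
  have hanti : AntilipschitzWith (⟨ε₀, le_of_lt hε₀⟩ : NNReal)⁻¹ Y := by
    apply ContinuousLinearMap.antilipschitz_of_bound
    intro v
    have := hlow v
    show ‖v‖ ≤ ε₀⁻¹ * ‖Y v‖
    calc ‖v‖ = ε₀⁻¹ * (ε₀ * ‖v‖) := by field_simp
      _ ≤ ε₀⁻¹ * ‖Y v‖ := by
          apply mul_le_mul_of_nonneg_left this (by positivity)
  have hker : LinearMap.ker (Y : E →ₗ[ℂ] E) = ⊥ := by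
    rw [LinearMap.ker_eq_bot]
    exact hanti.injective
  have hclosed : IsClosed (LinearMap.range (Y : E →ₗ[ℂ] E) : Set E) :=
    hanti.isClosed_range Y.uniformContinuous
  by_cases htop : LinearMap.range (Y : E →ₗ[ℂ] E) = ⊤
  · exfalso
    set e := ContinuousLinearEquiv.ofBijective Y hker htop with he
    have hYunit : IsUnit Y := by
      refine ⟨⟨Y, (e.symm : E →L[ℂ] E), ?_, ?_⟩, rfl⟩
      · ext v
        simp only [ContinuousLinearMap.mul_apply, ContinuousLinearMap.coe_coe,
          ContinuousLinearMap.one_apply]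
        show Y (e.symm v) = v
        have h5 : Y (e.symm v) = e (e.symm v) := rfl
        rw [h5, e.apply_symm_apply]
      · ext v
        simp only [ContinuousLinearMap.mul_apply, ContinuousLinearMap.coe_coe,
          ContinuousLinearMap.one_apply]
        show e.symm (Y v) = v
        have h5 : Y v = e v := rfl
        rw [h5, e.symm_apply_apply]
    have hnot := spectrum.mem_iff.mp hl
    apply hnot
    have : algebraMap ℂ (E →L[ℂ] E) lam - X = -Y := by
      rw [hY, Algebra.algebraMap_eq_smul_one]; abel
    rw [this]
    exact hYunit.neg
  · letI : CompleteSpace (LinearMap.range (Y : E →ₗ[ℂ] E)) := hclosed.completeSpace_coe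
    have hne : (LinearMap.range (Y : E →ₗ[ℂ] E))ᗮ ≠ ⊥ := by
      intro hbot
      exact htop (Submodule.orthogonal_eq_bot_iff.mp hbot)
    obtain ⟨w, hwmem, hwne⟩ := (Submodule.ne_bot_iff _).mp hne
    have hnw : (0 : ℝ) < ‖w‖ := norm_pos_iff.mpr hwne
    obtain ⟨u, hu⟩ : ∃ u : E, u = ((‖w‖⁻¹ : ℝ) : ℂ) • w := ⟨_, rfl⟩
    have hu1 : ‖u‖ = 1 := by
      rw [hu, norm_smul]
      simp [norm_inv, abs_of_pos hnw]
      field_simp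
    have humem : u ∈ (LinearMap.range (Y : E →ₗ[ℂ] E))ᗮ := by
      rw [hu]; exact Submodule.smul_mem _ _ hwmem
    have hperp : ∀ z : E, ⟪Y z, u⟫_ℂ = 0 := by
      intro z
      exact (Submodule.mem_orthogonal _ u).mp humem (Y z) (LinearMap.mem_range_self _ z)
    refine ⟨u, hu1, ?_⟩
    have hz : ∀ z : E, ⟪z, adjoint X u - (starRingEnd ℂ) lam • u⟫_ℂ = 0 := by
      intro z
      have h6 := hperp z
      rw [hYv, inner_sub_left, inner_smul_left, sub_eq_zero] at h6
      rw [inner_sub_right, adjoint_inner_right, inner_smul_right, h6, sub_self]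
    have := hz (adjoint X u - (starRingEnd ℂ) lam • u)
    rw [inner_self_eq_zero] at this
    exact sub_eq_zero.mp this

end Dichotomy


section HardDirection

open ContinuousLinearMap

variable {H K HK : Type*}
    [NormedAddCommGroup H] [InnerProductSpace ℂ H] [CompleteSpace H]
    [NormedAddCommGroup K] [InnerProductSpace ℂ K] [CompleteSpace K]
    [NormedAddCommGroup HK] [InnerProductSpace ℂ HK] [CompleteSpace HK]
    (tp : TensorProdStructure H K HK)

lemma prod_mem_spectrum (S : H →L[ℂ] H) (T : K →L[ℂ] K) (ST : HK →L[ℂ] HK)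
    (hST : ∀ x y, ST (tp.emb x y) = tp.emb (S x) (T y))
    {η ζ : ℂ} (hη : η ∈ spectrum ℂ S) (hζ : ζ ∈ spectrum ℂ T) :
    η * ζ ∈ spectrum ℂ ST := by
  by_contra hz
  rw [spectrum.notMem_iff] at hz
  obtain ⟨u, huu⟩ := hz
  set S₁ := tp.opTensor S 1 with hS₁
  set T₁ := tp.opTensor 1 T with hT₁
  have hS₁emb : ∀ x y, S₁ (tp.emb x y) = tp.emb (S x) y := by
    intro x y; rw [hS₁, tp.opTensor_emb, ContinuousLinearMap.one_apply]
  have hT₁emb : ∀ x y, T₁ (tp.emb x y) = tp.emb x (T y) := by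
    intro x y; rw [hT₁, tp.opTensor_emb, ContinuousLinearMap.one_apply]
  have hSTdef : ST = S₁ * T₁ := by
    apply tp.ext_emb; intro x y
    rw [hST, ContinuousLinearMap.mul_apply, hT₁emb, hS₁emb]
  have hcomm : Commute S₁ T₁ := by
    show S₁ * T₁ = T₁ * S₁
    rw [hS₁, hT₁, tp.opTensor_mul, tp.opTensor_mul, one_mul, mul_one, one_mul, mul_one]
  have hU : (↑u : HK →L[ℂ] HK) = algebraMap ℂ _ (η * ζ) - ST := huu
  have hcommS : Commute S₁ (↑u : HK →L[ℂ] HK) := by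
    rw [hU, hSTdef]
    exact Commute.sub_right ((Algebra.commutes (η * ζ) S₁).symm)
      ((Commute.refl S₁).mul_right hcomm)
  have hcommT : Commute T₁ (↑u : HK →L[ℂ] HK) := by
    rw [hU, hSTdef]
    exact Commute.sub_right ((Algebra.commutes (η * ζ) T₁).symm)
      ((hcomm.symm).mul_right (Commute.refl T₁))
  have hcommSinv : Commute S₁ (↑u⁻¹ : HK →L[ℂ] HK) := hcommS.units_inv_right
  have hcommTinv : Commute T₁ (↑u⁻¹ : HK →L[ℂ] HK) := hcommT.units_inv_right
  set C₁ := -((↑u⁻¹ : HK →L[ℂ] HK) * T₁) with hC₁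
  set C₂ := -(algebraMap ℂ (HK →L[ℂ] HK) η * (↑u⁻¹ : HK →L[ℂ] HK)) with hC₂
  -- the resolvent identity
  have hid : C₁ * (S₁ - algebraMap ℂ _ η) + C₂ * (T₁ - algebraMap ℂ _ ζ) = 1 := by
    set a := (↑u⁻¹ : HK →L[ℂ] HK) with ha
    have hst : S₁ * T₁ = T₁ * S₁ := hcomm
    have hpt : T₁ * algebraMap ℂ (HK →L[ℂ] HK) η = algebraMap ℂ _ η * T₁ :=
      (Algebra.commutes η T₁).symm
    have hpa : algebraMap ℂ (HK →L[ℂ] HK) η * a = a * algebraMap ℂ _ η :=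
      Algebra.commutes η a
    have hua : a * ↑u = 1 := u.inv_mul
    calc C₁ * (S₁ - algebraMap ℂ _ η) + C₂ * (T₁ - algebraMap ℂ _ ζ)
        = -(a * (T₁ * S₁)) + a * (T₁ * algebraMap ℂ _ η)
          + (-(algebraMap ℂ _ η * (a * T₁)) + algebraMap ℂ _ η * (a * algebraMap ℂ _ ζ)) := by
          rw [hC₁, hC₂]; noncomm_ring
      _ = -(a * (S₁ * T₁)) + a * (algebraMap ℂ _ η * T₁)
          + (-(a * (algebraMap ℂ _ η * T₁)) + a * (algebraMap ℂ _ η * algebraMap ℂ _ ζ)) := by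
          rw [← hst, hpt, ← mul_assoc (algebraMap ℂ (HK →L[ℂ] HK) η) a T₁, hpa,
            ← mul_assoc (algebraMap ℂ (HK →L[ℂ] HK) η) a (algebraMap ℂ _ ζ), hpa,
            mul_assoc a (algebraMap ℂ (HK →L[ℂ] HK) η) T₁,
            mul_assoc a (algebraMap ℂ (HK →L[ℂ] HK) η) (algebraMap ℂ _ ζ)]
      _ = a * (algebraMap ℂ _ η * algebraMap ℂ _ ζ - S₁ * T₁) := by noncomm_ring
      _ = a * (algebraMap ℂ _ (η * ζ) - S₁ * T₁) := by rw [map_mul]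
      _ = a * ↑u := by rw [hU, hSTdef]
      _ = 1 := hua
  -- action of S₁ - η and T₁ - ζ on elementary tensors
  have hSact : ∀ (x : H) (y : K),
      (S₁ - algebraMap ℂ _ η) (tp.emb x y) = tp.emb (S x - η • x) y := by
    intro x y
    rw [sub_apply, hS₁emb, Algebra.algebraMap_eq_smul_one, smul_apply, ContinuousLinearMap.one_apply,
      tp.emb_sub_left, tp.emb_smul_left]
  have hTact : ∀ (x : H) (y : K),
      (T₁ - algebraMap ℂ _ ζ) (tp.emb x y) = tp.emb x (T y - ζ • y) := by
    intro x y
    rw [sub_apply, hT₁emb, Algebra.algebraMap_eq_smul_one, smul_apply, ContinuousLinearMap.one_apply,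
      tp.emb_sub_right, tp.emb_smul_right]
  -- first factor control
  have hterm1 : ∃ a : H, ‖a‖ = 1 ∧ ∀ b : K, ‖b‖ = 1 →
      ‖⟪(C₁ * (S₁ - algebraMap ℂ _ η)) (tp.emb a b), tp.emb a b⟫_ℂ‖ ≤ 1/4 := by
    rcases approx_or_adjoint_eigen S hη with hap | heig
    · obtain ⟨a, ha1, ha2⟩ := hap (1/(4*(‖C₁‖+1))) (by positivity)
      refine ⟨a, ha1, fun b hb1 => ?_⟩
      rw [ContinuousLinearMap.mul_apply, hSact]
      calc ‖⟪C₁ (tp.emb (S a - η • a) b), tp.emb a b⟫_ℂ‖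
          ≤ ‖C₁ (tp.emb (S a - η • a) b)‖ * ‖tp.emb a b‖ := norm_inner_le_norm _ _
        _ ≤ (‖C₁‖ * ‖tp.emb (S a - η • a) b‖) * 1 := by
            rw [tp.norm_emb, ha1, hb1, one_mul]
            exact mul_le_mul_of_nonneg_right (C₁.le_opNorm _) (by norm_num)
        _ = ‖C₁‖ * (‖S a - η • a‖ * ‖b‖) := by rw [tp.norm_emb]; ring
        _ ≤ ‖C₁‖ * (1/(4*(‖C₁‖+1))) := by
            rw [hb1, mul_one]
            exact mul_le_mul_of_nonneg_left (le_of_lt ha2) (norm_nonneg _)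
        _ ≤ 1/4 := by
            have h0 : (0:ℝ) ≤ ‖C₁‖ := norm_nonneg _
            rw [mul_one_div, div_le_div_iff₀ (by positivity) (by norm_num)]
            nlinarith
    · obtain ⟨a, ha1, ha2⟩ := heig
      refine ⟨a, ha1, fun b hb1 => ?_⟩
      have hcommC : Commute (S₁ - algebraMap ℂ _ η) C₁ := by
        apply Commute.neg_right
        apply Commute.sub_left
        · exact hcommSinv.mul_right hcomm
        · exact Commute.mul_right ((Algebra.commutes η (↑u⁻¹ : HK →L[ℂ] HK)))
            (Algebra.commutes η T₁)
      rw [← hcommC.eq, ContinuousLinearMap.mul_apply]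
      have hadj : adjoint (S₁ - algebraMap ℂ _ η) (tp.emb a b) = 0 := by
        rw [map_sub]
        have e1 : adjoint S₁ (tp.emb a b) = tp.emb (adjoint S a) b := by
          have hone : adjoint (1 : K →L[ℂ] K) = 1 := by
            rw [← star_eq_adjoint, star_one]
          rw [hS₁, tp.adjoint_opTensor_emb, hone, ContinuousLinearMap.one_apply]
        have e2 : adjoint (algebraMap ℂ (HK →L[ℂ] HK) η) (tp.emb a b)
            = (starRingEnd ℂ) η • tp.emb a b := by
          rw [Algebra.algebraMap_eq_smul_one, ← star_eq_adjoint, star_smul, star_one,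
            smul_apply, ContinuousLinearMap.one_apply]
          rfl
        rw [sub_apply, e1, e2, ha2, tp.emb_smul_left, sub_self]
      have : ⟪(S₁ - algebraMap ℂ _ η) (C₁ (tp.emb a b)), tp.emb a b⟫_ℂ = 0 := by
        rw [← adjoint_inner_right, hadj, inner_zero_right]
      rw [this, norm_zero]
      norm_num
  -- second factor control
  have hterm2 : ∃ b : K, ‖b‖ = 1 ∧ ∀ a : H, ‖a‖ = 1 →
      ‖⟪(C₂ * (T₁ - algebraMap ℂ _ ζ)) (tp.emb a b), tp.emb a b⟫_ℂ‖ ≤ 1/4 := by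
    rcases approx_or_adjoint_eigen T hζ with hap | heig
    · obtain ⟨b, hb1, hb2⟩ := hap (1/(4*(‖C₂‖+1))) (by positivity)
      refine ⟨b, hb1, fun a ha1 => ?_⟩
      rw [ContinuousLinearMap.mul_apply, hTact]
      calc ‖⟪C₂ (tp.emb a (T b - ζ • b)), tp.emb a b⟫_ℂ‖
          ≤ ‖C₂ (tp.emb a (T b - ζ • b))‖ * ‖tp.emb a b‖ := norm_inner_le_norm _ _
        _ ≤ (‖C₂‖ * ‖tp.emb a (T b - ζ • b)‖) * 1 := by
            rw [tp.norm_emb, ha1, hb1, one_mul]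
            exact mul_le_mul_of_nonneg_right (C₂.le_opNorm _) (by norm_num)
        _ = ‖C₂‖ * (‖a‖ * ‖T b - ζ • b‖) := by rw [tp.norm_emb]; ring
        _ ≤ ‖C₂‖ * (1/(4*(‖C₂‖+1))) := by
            rw [ha1, one_mul]
            exact mul_le_mul_of_nonneg_left (le_of_lt hb2) (norm_nonneg _)
        _ ≤ 1/4 := by
            have h0 : (0:ℝ) ≤ ‖C₂‖ := norm_nonneg _
            rw [mul_one_div, div_le_div_iff₀ (by positivity) (by norm_num)]
            nlinarith
    · obtain ⟨b, hb1, hb2⟩ := heig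
      refine ⟨b, hb1, fun a ha1 => ?_⟩
      have hcommC : Commute (T₁ - algebraMap ℂ _ ζ) C₂ := by
        apply Commute.neg_right
        apply Commute.sub_left
        · exact Commute.mul_right ((Algebra.commutes η T₁).symm) hcommTinv
        · exact Commute.mul_right (Algebra.commutes ζ (algebraMap ℂ (HK →L[ℂ] HK) η))
            (Algebra.commutes ζ (↑u⁻¹ : HK →L[ℂ] HK))
      rw [← hcommC.eq, ContinuousLinearMap.mul_apply]
      have hadj : adjoint (T₁ - algebraMap ℂ _ ζ) (tp.emb a b) = 0 := by
        rw [map_sub]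
        have e1 : adjoint T₁ (tp.emb a b) = tp.emb a (adjoint T b) := by
          have hone : adjoint (1 : H →L[ℂ] H) = 1 := by
            rw [← star_eq_adjoint, star_one]
          rw [hT₁, tp.adjoint_opTensor_emb, hone, ContinuousLinearMap.one_apply]
        have e2 : adjoint (algebraMap ℂ (HK →L[ℂ] HK) ζ) (tp.emb a b)
            = (starRingEnd ℂ) ζ • tp.emb a b := by
          rw [Algebra.algebraMap_eq_smul_one, ← star_eq_adjoint, star_smul, star_one,
            smul_apply, ContinuousLinearMap.one_apply]
          rfl
        rw [sub_apply, e1, e2, hb2, tp.emb_smul_right, sub_self]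
      have : ⟪(T₁ - algebraMap ℂ _ ζ) (C₂ (tp.emb a b)), tp.emb a b⟫_ℂ = 0 := by
        rw [← adjoint_inner_right, hadj, inner_zero_right]
      rw [this, norm_zero]
      norm_num
  obtain ⟨a, ha1, hA⟩ := hterm1
  obtain ⟨b, hb1, hB⟩ := hterm2
  set z := tp.emb a b with hzdef
  have hz1 : ‖z‖ = 1 := by rw [hzdef, tp.norm_emb, ha1, hb1, one_mul]
  have hinner1 : ⟪z, z⟫_ℂ = 1 := by
    rw [inner_self_eq_norm_sq_to_K, hz1]
    norm_num
  have happly : (C₁ * (S₁ - algebraMap ℂ _ η) + C₂ * (T₁ - algebraMap ℂ _ ζ)) z = z := by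
    rw [hid, ContinuousLinearMap.one_apply]
  have hsum : (1 : ℂ) = ⟪(C₁ * (S₁ - algebraMap ℂ _ η)) z, z⟫_ℂ
      + ⟪(C₂ * (T₁ - algebraMap ℂ _ ζ)) z, z⟫_ℂ := by
    rw [← inner_add_left, ← add_apply, happly, hinner1]
  have hn1 := hA b hb1
  have hn2 := hB a ha1
  have : (1 : ℝ) ≤ 1/4 + 1/4 := by
    calc (1 : ℝ) = ‖(1 : ℂ)‖ := by norm_num
      _ = ‖⟪(C₁ * (S₁ - algebraMap ℂ _ η)) z, z⟫_ℂ
            + ⟪(C₂ * (T₁ - algebraMap ℂ _ ζ)) z, z⟫_ℂ‖ := by rw [← hsum]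
      _ ≤ ‖⟪(C₁ * (S₁ - algebraMap ℂ _ η)) z, z⟫_ℂ‖
            + ‖⟪(C₂ * (T₁ - algebraMap ℂ _ ζ)) z, z⟫_ℂ‖ := norm_add_le _ _
      _ ≤ 1/4 + 1/4 := add_le_add hn1 hn2
  linarith

end HardDirection


section EasyDirection

open ContinuousLinearMap WeakDual

variable {H K HK : Type*}
    [NormedAddCommGroup H] [InnerProductSpace ℂ H] [CompleteSpace H]
    [NormedAddCommGroup K] [InnerProductSpace ℂ K] [CompleteSpace K]
    [NormedAddCommGroup HK] [InnerProductSpace ℂ HK] [CompleteSpace HK]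
    (tp : TensorProdStructure H K HK)

set_option maxHeartbeats 1000000 in
set_option synthInstance.maxHeartbeats 200000 in
lemma spectrum_subset_prod (S : H →L[ℂ] H) (T : K →L[ℂ] K) (ST : HK →L[ℂ] HK)
    (hST : ∀ x y, ST (tp.emb x y) = tp.emb (S x) (T y)) :
    spectrum ℂ ST ⊆ {z : ℂ | ∃ η ∈ spectrum ℂ S, ∃ ζ ∈ spectrum ℂ T, z = η * ζ} := by
  intro z hz
  set S₁ := tp.opTensor S 1 with hS₁
  set T₁ := tp.opTensor 1 T with hT₁
  have hS₁emb : ∀ x y, S₁ (tp.emb x y) = tp.emb (S x) y := by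
    intro x y; rw [hS₁, tp.opTensor_emb, ContinuousLinearMap.one_apply]
  have hT₁emb : ∀ x y, T₁ (tp.emb x y) = tp.emb x (T y) := by
    intro x y; rw [hT₁, tp.opTensor_emb, ContinuousLinearMap.one_apply]
  have hSTdef : ST = S₁ * T₁ := by
    apply tp.ext_emb; intro x y
    rw [hST, ContinuousLinearMap.mul_apply, hT₁emb, hS₁emb]
  have hcomm : S₁ * T₁ = T₁ * S₁ := by
    rw [hS₁, hT₁, tp.opTensor_mul, tp.opTensor_mul, one_mul, mul_one, one_mul, mul_one]
  set E' : Subalgebra ℂ (HK →L[ℂ] HK) := Subalgebra.centralizer ℂ {S₁, T₁} with hE'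
  set Ccal : Subalgebra ℂ (HK →L[ℂ] HK) :=
    Subalgebra.centralizer ℂ (E' : Set (HK →L[ℂ] HK)) with hCcal
  have hS₁E' : S₁ ∈ E' := by
    rw [hE', Subalgebra.mem_centralizer_iff]
    intro c hc
    rcases hc with hc | hc
    · subst hc; rfl
    · simp only [Set.mem_singleton_iff] at hc; subst hc; exact hcomm.symm
  have hT₁E' : T₁ ∈ E' := by
    rw [hE', Subalgebra.mem_centralizer_iff]
    intro c hc
    rcases hc with hc | hc
    · subst hc; exact hcomm
    · simp only [Set.mem_singleton_iff] at hc; subst hc; rfl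
  have hmemS₁ : S₁ ∈ Ccal := by
    rw [hCcal, Subalgebra.mem_centralizer_iff]
    intro g hg
    have hg' := (Subalgebra.mem_centralizer_iff ℂ).mp (SetLike.mem_coe.mp hg)
    exact (hg' S₁ (by simp)).symm
  have hmemT₁ : T₁ ∈ Ccal := by
    rw [hCcal, Subalgebra.mem_centralizer_iff]
    intro g hg
    have hg' := (Subalgebra.mem_centralizer_iff ℂ).mp (SetLike.mem_coe.mp hg)
    exact (hg' T₁ (by simp)).symm
  have hmemST : ST ∈ Ccal := by rw [hSTdef]; exact mul_mem hmemS₁ hmemT₁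
  have hCcomm : ∀ a b : Ccal, a * b = b * a := by
    rintro ⟨a, ha⟩ ⟨b, hb⟩
    apply Subtype.ext
    have hbE' : b ∈ E' := by
      rw [hE', Subalgebra.mem_centralizer_iff]
      intro c hc
      have hb' := (Subalgebra.mem_centralizer_iff ℂ).mp hb
      rcases hc with hc | hc
      · subst hc; exact hb' S₁ (SetLike.mem_coe.mpr hS₁E')
      · simp only [Set.mem_singleton_iff] at hc; subst hc
        exact hb' T₁ (SetLike.mem_coe.mpr hT₁E')
    have ha' := (Subalgebra.mem_centralizer_iff ℂ).mp ha
    exact (ha' b (SetLike.mem_coe.mpr hbE')).symm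
  have hclosed : IsClosed (Ccal : Set (HK →L[ℂ] HK)) := by
    have hset : (Ccal : Set (HK →L[ℂ] HK))
        = ⋂ b ∈ (E' : Set (HK →L[ℂ] HK)), {a | b * a = a * b} := by
      ext a
      simp only [Set.mem_iInter, Set.mem_setOf_eq, SetLike.mem_coe]
      rw [hCcal, Subalgebra.mem_centralizer_iff]
      rfl
    rw [hset]
    apply isClosed_biInter
    intro b _
    exact isClosed_eq (continuous_const.mul continuous_id) (continuous_id.mul continuous_const)
  letI : CompleteSpace Ccal := hclosed.completeSpace_coe
  letI : NormedCommRing Ccal := { (inferInstance : NormedRing Ccal) with mul_comm := hCcomm }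
  have hz' : z ∈ spectrum ℂ (⟨ST, hmemST⟩ : Ccal) := by
    rw [spectrum.mem_iff] at hz ⊢
    intro hun
    apply hz
    have hmap := hun.map Ccal.val
    have heq : (Ccal.val) (algebraMap ℂ Ccal z - ⟨ST, hmemST⟩)
        = algebraMap ℂ (HK →L[ℂ] HK) z - ST := by
      rw [map_sub, AlgHom.commutes]; rfl
    rw [heq] at hmap
    exact hmap
  obtain ⟨f, hf⟩ := WeakDual.CharacterSpace.mem_spectrum_iff_exists.mp hz'
  have hprod : z = f ⟨S₁, hmemS₁⟩ * f ⟨T₁, hmemT₁⟩ := by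
    rw [← hf]
    have hmul : (⟨ST, hmemST⟩ : Ccal) = ⟨S₁, hmemS₁⟩ * ⟨T₁, hmemT₁⟩ := Subtype.ext hSTdef
    rw [hmul, map_mul]
  have htrans : ∀ (A : HK →L[ℂ] HK) (hA : A ∈ Ccal) (lam : ℂ),
      lam ∈ spectrum ℂ (⟨A, hA⟩ : Ccal) → lam ∈ spectrum ℂ A := by
    intro A hA lam hmem
    rw [spectrum.mem_iff] at hmem ⊢
    intro hun
    apply hmem
    obtain ⟨v, hv⟩ := hun
    have hvinvmem : (↑v⁻¹ : HK →L[ℂ] HK) ∈ Ccal := by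
      rw [hCcal, Subalgebra.mem_centralizer_iff]
      intro g hg
      have hgA : Commute g (↑v : HK →L[ℂ] HK) := by
        rw [hv]
        apply Commute.sub_right
        · exact (Algebra.commutes lam g).symm
        · exact (Subalgebra.mem_centralizer_iff _).mp hA g hg
      exact hgA.units_inv_right.eq
    have hvmem : ((↑v : HK →L[ℂ] HK)) ∈ Ccal := by
      rw [hv]
      exact sub_mem (Subalgebra.algebraMap_mem _ _) hA
    refine ⟨⟨⟨↑v, hvmem⟩, ⟨↑v⁻¹, hvinvmem⟩, ?_, ?_⟩, ?_⟩
    · exact Subtype.ext v.mul_inv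
    · exact Subtype.ext v.inv_mul
    · apply Subtype.ext
      show (↑v : HK →L[ℂ] HK) = _
      rw [hv]
      rfl
  have hη2 : f ⟨S₁, hmemS₁⟩ ∈ spectrum ℂ S₁ :=
    htrans _ _ _ (CharacterSpace.apply_mem_spectrum f _)
  have hζ2 : f ⟨T₁, hmemT₁⟩ ∈ spectrum ℂ T₁ :=
    htrans _ _ _ (CharacterSpace.apply_mem_spectrum f _)
  have hη3 : f ⟨S₁, hmemS₁⟩ ∈ spectrum ℂ S := by
    by_contra hcon
    rw [spectrum.notMem_iff] at hcon
    exact (spectrum.mem_iff.mp hη2) (tp.isUnit_opTensor_left hcon)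
  have hζ3 : f ⟨T₁, hmemT₁⟩ ∈ spectrum ℂ T := by
    by_contra hcon
    rw [spectrum.notMem_iff] at hcon
    exact (spectrum.mem_iff.mp hζ2) (tp.isUnit_opTensor_right hcon)
  exact ⟨f ⟨S₁, hmemS₁⟩, hη3, f ⟨T₁, hmemT₁⟩, hζ3, hprod⟩

end EasyDirection


/-- Brown–Pearcy: the spectrum of `S ⊗ T` on the Hilbert tensor product equals
the set of products `η ζ` with `η ∈ σ(S)`, `ζ ∈ σ(T)`. -/
theorem spectrum_tensor_product_eq_mul
    {H K HK : Type*}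
    [NormedAddCommGroup H] [InnerProductSpace ℂ H] [CompleteSpace H]
    [NormedAddCommGroup K] [InnerProductSpace ℂ K] [CompleteSpace K]
    [NormedAddCommGroup HK] [InnerProductSpace ℂ HK] [CompleteSpace HK]
    (tp : TensorProdStructure H K HK)
    (S : H →L[ℂ] H) (T : K →L[ℂ] K) (ST : HK →L[ℂ] HK)
    (hST : ∀ (x : H) (y : K), ST (tp.emb x y) = tp.emb (S x) (T y)) :
    spectrum ℂ ST = {z : ℂ | ∃ η ∈ spectrum ℂ S, ∃ ζ ∈ spectrum ℂ T, z = η * ζ} := by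
  ext z
  constructor
  · intro hz
    exact spectrum_subset_prod tp S T ST hST hz
  · rintro ⟨η, hη, ζ, hζ, rfl⟩
    exact prod_mem_spectrum tp S T ST hST hη hζ
end

section
/- Let E be a real Banach space and Q₁, Q₂ ∈ L(E*, E) positive symmetric operators with reproducing kernel Hilbert spaces H_{Q₁}, H_{Q₂} continuously embedded in E. Then H_{Q₁} ⊆ H_{Q₂} as subsets of E if and only if there exists a constant K ≥ 0 such that ⟨Q₁ x*, x*⟩ ≤ K ⟨Q₂ x*, x*⟩ for all x* ∈ E*; in that case the inclusion map H_{Q₁} ↪ H_{Q₂} is continuous. -/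
open scoped InnerProductSpace


private lemma rkhs_adjoint_relation
    {E H : Type*} [NormedAddCommGroup E] [NormedSpace ℝ E]
    [NormedAddCommGroup H] [InnerProductSpace ℝ H]
    (i : H →L[ℝ] E) (Q : StrongDual ℝ E →L[ℝ] E)
    (k : StrongDual ℝ E →ₗ[ℝ] H)
    (hk : ∀ f g : StrongDual ℝ E, ⟪k f, k g⟫_ℝ = f (Q g))
    (hik : ∀ f : StrongDual ℝ E, i (k f) = Q f)
    (hdense : Dense (LinearMap.range k : Set H)) :
    ∀ (f : StrongDual ℝ E) (x : H), ⟪k f, x⟫_ℝ = f (i x) := by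
  intro f x
  have hcont1 : Continuous fun y : H => ⟪k f, y⟫_ℝ :=
    Continuous.inner continuous_const continuous_id
  have hcont2 : Continuous fun y : H => f (i y) :=
    f.continuous.comp i.continuous
  have heq : Set.EqOn (fun y : H => ⟪k f, y⟫_ℝ) (fun y : H => f (i y))
      (LinearMap.range k : Set H) := by
    rintro y ⟨g, rfl⟩
    simp only
    rw [hk f g, hik g]
  exact congrFun (Continuous.ext_on hdense hcont1 hcont2 heq) x

/-- Comparison of reproducing kernel Hilbert spaces.  Let `Q₁, Q₂ : E* → E` be
positive symmetric operators on a real Banach space `E`, with reproducing kernel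
Hilbert spaces `H₁, H₂` continuously embedded in `E` via injective maps `i₁, i₂`,
where the RKHS structure is encoded by maps `k₁ = i₁*, k₂ = i₂*` with dense range
satisfying `⟪kⱼ f, kⱼ g⟫ = f (Qⱼ g)` and `iⱼ (kⱼ f) = Qⱼ f`.  Then `H₁ ⊆ H₂` as
subsets of `E` iff `⟨Q₁ x*, x*⟩ ≤ K ⟨Q₂ x*, x*⟩` for some `K ≥ 0` and all `x*`;
in that case the inclusion `H₁ ↪ H₂` is continuous. -/
theorem rkhs_subset_iff_quadratic_form_dominated
    {E H₁ H₂ : Type*}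
    [NormedAddCommGroup E] [NormedSpace ℝ E]
    [NormedAddCommGroup H₁] [InnerProductSpace ℝ H₁] [CompleteSpace H₁]
    [NormedAddCommGroup H₂] [InnerProductSpace ℝ H₂] [CompleteSpace H₂]
    (Q₁ Q₂ : StrongDual ℝ E →L[ℝ] E)
    (hpos₁ : ∀ f : StrongDual ℝ E, 0 ≤ f (Q₁ f))
    (hsym₁ : ∀ f g : StrongDual ℝ E, f (Q₁ g) = g (Q₁ f))
    (hpos₂ : ∀ f : StrongDual ℝ E, 0 ≤ f (Q₂ f))
    (hsym₂ : ∀ f g : StrongDual ℝ E, f (Q₂ g) = g (Q₂ f))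
    (i₁ : H₁ →L[ℝ] E) (hi₁ : Function.Injective ⇑i₁)
    (i₂ : H₂ →L[ℝ] E) (hi₂ : Function.Injective ⇑i₂)
    (k₁ : StrongDual ℝ E →ₗ[ℝ] H₁)
    (hk₁ : ∀ f g : StrongDual ℝ E, ⟪k₁ f, k₁ g⟫_ℝ = f (Q₁ g))
    (hik₁ : ∀ f : StrongDual ℝ E, i₁ (k₁ f) = Q₁ f)
    (hdense₁ : Dense (LinearMap.range k₁ : Set H₁))
    (k₂ : StrongDual ℝ E →ₗ[ℝ] H₂)
    (hk₂ : ∀ f g : StrongDual ℝ E, ⟪k₂ f, k₂ g⟫_ℝ = f (Q₂ g))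
    (hik₂ : ∀ f : StrongDual ℝ E, i₂ (k₂ f) = Q₂ f)
    (hdense₂ : Dense (LinearMap.range k₂ : Set H₂)) :
    ((Set.range ⇑i₁ ⊆ Set.range ⇑i₂) ↔
        ∃ K : ℝ, 0 ≤ K ∧ ∀ f : StrongDual ℝ E, f (Q₁ f) ≤ K * f (Q₂ f)) ∧
    ((Set.range ⇑i₁ ⊆ Set.range ⇑i₂) →
        ∃ C : ℝ, ∀ (x : H₁) (y : H₂), i₂ y = i₁ x → ‖y‖ ≤ C * ‖x‖) := by
    classical
  have adj₁ := rkhs_adjoint_relation i₁ Q₁ k₁ hk₁ hik₁ hdense₁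
  have adj₂ := rkhs_adjoint_relation i₂ Q₂ k₂ hk₂ hik₂ hdense₂
  have hQ₁ : ∀ f, f (Q₁ f) = ‖k₁ f‖ ^ 2 := fun f => by
    rw [← hk₁ f f, real_inner_self_eq_norm_sq]
  have hQ₂ : ∀ f, f (Q₂ f) = ‖k₂ f‖ ^ 2 := fun f => by
    rw [← hk₂ f f, real_inner_self_eq_norm_sq]
  -- Forward direction: range inclusion implies domination, with continuity
  have fwd : (Set.range ⇑i₁ ⊆ Set.range ⇑i₂) →
      ∃ C : ℝ, 0 ≤ C ∧ (∀ f : StrongDual ℝ E, f (Q₁ f) ≤ C ^ 2 * f (Q₂ f)) ∧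
        ∀ (x : H₁) (y : H₂), i₂ y = i₁ x → ‖y‖ ≤ C * ‖x‖ := by
    intro hsub
    have hex : ∀ x : H₁, ∃ y : H₂, i₂ y = i₁ x := fun x => hsub ⟨x, rfl⟩
    choose j hj using hex
    have jadd : ∀ x x', j (x + x') = j x + j x' := fun x x' =>
      hi₂ (by rw [hj, map_add, map_add, hj, hj])
    have jsmul : ∀ (c : ℝ) (x), j (c • x) = c • j x := fun c x =>
      hi₂ (by rw [hj, map_smul, map_smul, hj])
    let jl : H₁ →ₗ[ℝ] H₂ :=
      { toFun := j, map_add' := jadd, map_smul' := jsmul }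
    have jcont : Continuous jl := by
      apply jl.continuous_of_seq_closed_graph
      intro u x y hu hy
      have h1 : Filter.Tendsto (fun n => i₂ (jl (u n))) Filter.atTop (nhds (i₂ y)) :=
        (i₂.continuous.tendsto y).comp hy
      have h2 : Filter.Tendsto (fun n => i₁ (u n)) Filter.atTop (nhds (i₁ x)) :=
        (i₁.continuous.tendsto x).comp hu
      have h3 : (fun n => i₂ (jl (u n))) = fun n => i₁ (u n) := by
        funext n; exact hj (u n)
      rw [h3] at h1
      exact hi₂ ((tendsto_nhds_unique h1 h2).trans (hj x).symm)
    let jc : H₁ →L[ℝ] H₂ := ⟨jl, jcont⟩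
    have hkey : ∀ f, k₁ f = (ContinuousLinearMap.adjoint jc) (k₂ f) := by
      intro f
      apply ext_inner_right ℝ
      intro x
      rw [adj₁ f x, ContinuousLinearMap.adjoint_inner_left, adj₂ f (jc x)]
      exact congrArg f (hj x).symm
    refine ⟨‖jc‖, norm_nonneg _, fun f => ?_, fun x y hxy => ?_⟩
    · rw [hQ₁ f, hQ₂ f, hkey f]
      calc ‖(ContinuousLinearMap.adjoint jc) (k₂ f)‖ ^ 2
          ≤ (‖ContinuousLinearMap.adjoint jc‖ * ‖k₂ f‖) ^ 2 := by
            apply pow_le_pow_left₀ (norm_nonneg _)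
            exact ContinuousLinearMap.le_opNorm _ _
        _ = ‖jc‖ ^ 2 * ‖k₂ f‖ ^ 2 := by
            rw [ContinuousLinearMap.adjoint.norm_map jc]; ring
    · have : y = jc x := hi₂ (by rw [hxy]; exact (hj x).symm)
      rw [this]
      exact jc.le_opNorm x
  -- Backward direction
  have bwd : (∃ K : ℝ, 0 ≤ K ∧ ∀ f : StrongDual ℝ E, f (Q₁ f) ≤ K * f (Q₂ f)) →
      Set.range ⇑i₁ ⊆ Set.range ⇑i₂ := by
    rintro ⟨K, hK, hdom⟩
    have hnorm : ∀ f, ‖k₁ f‖ ≤ Real.sqrt K * ‖k₂ f‖ := by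
      intro f
      have h1 : ‖k₁ f‖ ^ 2 ≤ K * ‖k₂ f‖ ^ 2 := by
        rw [← hQ₁ f, ← hQ₂ f]; exact hdom f
      have h2 : ‖k₁ f‖ ≤ Real.sqrt (K * ‖k₂ f‖ ^ 2) := by
        rw [← Real.sqrt_sq (norm_nonneg (k₁ f))]
        exact Real.sqrt_le_sqrt h1
      rwa [Real.sqrt_mul hK, Real.sqrt_sq (norm_nonneg _)] at h2
    have hle : LinearMap.ker k₂ ≤ LinearMap.ker k₁ := by
      intro f hf
      rw [LinearMap.mem_ker] at hf ⊢
      have := hnorm f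
      rw [hf, norm_zero, mul_zero] at this
      exact norm_eq_zero.mp (le_antisymm this (norm_nonneg _))
    let T₀ : (LinearMap.range k₂) →ₗ[ℝ] H₁ :=
      (Submodule.liftQ (LinearMap.ker k₂) k₁ hle).comp
        (LinearMap.quotKerEquivRange k₂).symm.toLinearMap
    have hT₀ : ∀ (f : StrongDual ℝ E) (h : k₂ f ∈ LinearMap.range k₂),
        T₀ ⟨k₂ f, h⟩ = k₁ f := by
      intro f h
      simp only [T₀, LinearMap.comp_apply, LinearEquiv.coe_toLinearMap,
        LinearMap.quotKerEquivRange_symm_apply_image, Submodule.liftQ_apply,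
        Submodule.mkQ_apply]
    have hbound : ∀ y : LinearMap.range k₂, ‖T₀ y‖ ≤ Real.sqrt K * ‖y‖ := by
      rintro ⟨y, f, rfl⟩
      rw [hT₀ f ⟨f, rfl⟩]
      exact hnorm f
    let T₀c : (LinearMap.range k₂) →L[ℝ] H₁ :=
      T₀.mkContinuous (Real.sqrt K) hbound
    let e : (LinearMap.range k₂) →L[ℝ] H₂ := (LinearMap.range k₂).subtypeL
    have hde : DenseRange e := by
      have : Set.range ⇑e = (LinearMap.range k₂ : Set H₂) := Subtype.range_coe
      rw [DenseRange, this]; exact hdense₂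
    have hue : IsUniformInducing e :=
      (isometry_subtype_coe).isUniformInducing
    let T : H₂ →L[ℝ] H₁ := T₀c.extend e
    have hT : ∀ f, T (k₂ f) = k₁ f := by
      intro f
      have : T (e ⟨k₂ f, ⟨f, rfl⟩⟩) = T₀c ⟨k₂ f, ⟨f, rfl⟩⟩ :=
        ContinuousLinearMap.extend_eq T₀c hde hue _
      simpa [e, T₀c, hT₀ f ⟨f, rfl⟩] using this
    let S : H₁ →L[ℝ] H₂ := ContinuousLinearMap.adjoint T
    have hS : ∀ x : H₁, i₂ (S x) = i₁ x := by
      intro x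
      rw [NormedSpace.eq_iff_forall_dual_eq ℝ]
      intro f
      rw [← adj₂ f (S x), ← adj₁ f x, real_inner_comm,
        ContinuousLinearMap.adjoint_inner_left, ← hT f, real_inner_comm]
    rintro z ⟨x, rfl⟩
    exact ⟨S x, hS x⟩
  refine ⟨⟨fun h => ?_, bwd⟩, fun h => ?_⟩
  · obtain ⟨C, hC, hdom, _⟩ := fwd h
    exact ⟨C ^ 2, sq_nonneg C, hdom⟩
  · obtain ⟨C, _, _, hcont⟩ := fwd h
    exact ⟨C, hcont⟩
end
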